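/- Let B be the set of nonempty finite subsets of positive integers with the order ≪ (D ≪ D' iff D = D' or D lies entirely below D'). For any word π over B and any piecewise decreasing and connected patterns p₁, …, p_m, the joint statistics (bDES, (p₁, …, p_m)) and (bASC, (p₁, …, p_m)) are equidistributed over the equivalence class of π in L(B, ≪), where bDES(π) = {i : D_i ≫ D_{i+1}} and bASC(π) = {i : D_i ≪ D_{i+1}, D_i ≠ D_{i+1}}. -/

import Mathlib

namespace PCW

/-- `sb u v` : every letter of `u` is (strictly) below every letter of `v`.
Thus `u ≪ v` iff `u = v ∨ sb u v`. -/
def sb (u v : List ℕ) : Prop := ∀ x ∈ u, ∀ y ∈ v, x < y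

/-- A block of a word over `B`: a nonempty strictly decreasing sequence of
positive integers. -/
def IsBlock (D : List ℕ) : Prop := D ≠ [] ∧ D.Pairwise (· > ·) ∧ ∀ x ∈ D, 0 < x

/-- Adjacency in the free monoid over `(B, ≪)` : swap of two adjacent,
distinct and comparable blocks. -/
inductive Adj : List (List ℕ) → List (List ℕ) → Prop
  | swap (u v : List (List ℕ)) (a b : List ℕ) (hne : a ≠ b)
      (hcomp : sb a b ∨ sb b a) :
      Adj (u ++ a :: b :: v) (u ++ b :: a :: v)

/-- Equivalence in the partially commutative monoid `L(B, ≪)`. -/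
def Equiv (π π' : List (List ℕ)) : Prop := Relation.ReflTransGen Adj π π'

/-- Two lists of naturals are order isomorphic: same length and `<`
holds in corresponding positions simultaneously. -/
def OrdIso (u v : List ℕ) : Prop :=
  ∃ h : u.length = v.length, ∀ (a b : ℕ) (ha : a < u.length) (hb : b < u.length),
    (u[a]'ha < u[b]'hb ↔ v[a]'(by omega) < v[b]'(by omega))

/-- Occurrences of a (piecewise decreasing) dashed pattern `p`, given as its
list of blocks, in a word `π` over `B`: a strictly increasing choice of blocks
of `π` together with starting positions of contiguous subsequences, whose
concatenation is order isomorphic to the concatenation of the blocks of `p`. -/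
def blockOccs (p π : List (List ℕ)) :
    Set ((Fin p.length → Fin π.length) × (Fin p.length → ℕ)) :=
  {o | StrictMono o.1
    ∧ (∀ i : Fin p.length, o.2 i + (p.get i).length ≤ (π.get (o.1 i)).length)
    ∧ OrdIso
        (List.ofFn fun i : Fin p.length =>
          ((π.get (o.1 i)).drop (o.2 i)).take (p.get i).length).flatten
        p.flatten}

/-- The number of occurrences of the pattern `p` in the word `π` over `B`. -/
noncomputable def occ (p π : List (List ℕ)) : ℕ := (blockOccs p π).ncard

end PCW
namespace PCW

/-- Block descent set of `π = D₁ | D₂ | ⋯ | D_k`: positions `i`,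
`1 ≤ i ≤ k-1`, with `D_i ≫ D_{i+1}`. -/
def bDES (π : List (List ℕ)) : Set ℕ :=
  {i | ∃ h : i < π.length, 0 < i ∧ sb (π[i]'h) (π[i - 1]'(by omega))}

/-- Block rise set of `π = D₁ | D₂ | ⋯ | D_k`: positions `i`,
`1 ≤ i ≤ k-1`, with `D_i ≪ D_{i+1}`, `D_i ≠ D_{i+1}`. -/
def bASC (π : List (List ℕ)) : Set ℕ :=
  {i | ∃ h : i < π.length, 0 < i ∧ sb (π[i - 1]'(by omega)) (π[i]'h)}

end PCW

open PCW

namespace PCWProof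
open PCW

lemma sb_trans {a b c : List ℕ} (hb : b ≠ []) (h1 : sb a b) (h2 : sb b c) : sb a c := by
  intro x hx y hy
  obtain ⟨m, hm⟩ := List.exists_mem_of_ne_nil b hb
  exact lt_trans (h1 x hx m hm) (h2 m hm y hy)

lemma sb_asymm {a b : List ℕ} (ha : a ≠ []) (hb : b ≠ []) (h1 : sb a b) (h2 : sb b a) : False := by
  obtain ⟨x, hx⟩ := List.exists_mem_of_ne_nil a ha
  obtain ⟨y, hy⟩ := List.exists_mem_of_ne_nil b hb
  exact absurd (h1 x hx y hy) (not_lt.2 (le_of_lt (h2 y hy x hx)))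

lemma not_sb_self {a : List ℕ} (ha : a ≠ []) : ¬ sb a a := fun h => sb_asymm ha ha h h

/-- `AdjT T`: an adjacent swap whose "pair position" (in the `bDES`/`bASC`
indexing) avoids `T`. -/
def AdjT (T : Set ℕ) (w w' : List (List ℕ)) : Prop :=
  ∃ u a b v, w = u ++ a :: b :: v ∧ w' = u ++ b :: a :: v ∧ a ≠ b ∧
    (sb a b ∨ sb b a) ∧ u.length + 1 ∉ T

def EquivT (T : Set ℕ) : List (List ℕ) → List (List ℕ) → Prop :=
  Relation.ReflTransGen (AdjT T)

lemma adj_iff {w w' : List (List ℕ)} :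
    Adj w w' ↔ ∃ u a b v, w = u ++ a :: b :: v ∧ w' = u ++ b :: a :: v ∧ a ≠ b ∧
      (sb a b ∨ sb b a) := by
  constructor
  · rintro ⟨u, v, a, b, hne, hcomp⟩
    exact ⟨u, a, b, v, rfl, rfl, hne, hcomp⟩
  · rintro ⟨u, a, b, v, rfl, rfl, hne, hcomp⟩
    exact Adj.swap u v a b hne hcomp

lemma AdjT.adj {T w w'} (h : AdjT T w w') : Adj w w' := by
  obtain ⟨u, a, b, v, rfl, rfl, hne, hcomp, -⟩ := h
  exact Adj.swap u v a b hne hcomp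

lemma AdjT.symm {T w w'} (h : AdjT T w w') : AdjT T w' w := by
  obtain ⟨u, a, b, v, rfl, rfl, hne, hcomp, hT⟩ := h
  exact ⟨u, b, a, v, rfl, rfl, hne.symm, hcomp.symm, hT⟩

lemma EquivT.symm {T w w'} (h : EquivT T w w') : EquivT T w' w := by
  induction h with
  | refl => exact Relation.ReflTransGen.refl
  | tail _ h2 ih => exact Relation.ReflTransGen.head h2.symm ih

lemma EquivT.trans {T w w' w''} (h : EquivT T w w') (h' : EquivT T w' w'') :
    EquivT T w w'' := Relation.ReflTransGen.trans h h'

lemma EquivT.equiv {T w w'} (h : EquivT T w w') : PCW.Equiv w w' := by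
  induction h with
  | refl => exact Relation.ReflTransGen.refl
  | tail _ h2 ih => exact Relation.ReflTransGen.tail ih h2.adj

lemma adj_perm {w w'} (h : Adj w w') : w.Perm w' := by
  rw [adj_iff] at h
  obtain ⟨u, a, b, v, rfl, rfl, -, -⟩ := h
  exact List.Perm.append_left u (List.Perm.swap b a v)

lemma equiv_perm {w w'} (h : PCW.Equiv w w') : w.Perm w' := by
  induction h with
  | refl => exact List.Perm.refl _
  | tail _ h2 ih => exact ih.trans (adj_perm h2)

lemma equiv_length_eq {w w'} (h : PCW.Equiv w w') : w.length = w'.length :=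
  (equiv_perm h).length_eq

lemma equiv_symm {w w'} (h : PCW.Equiv w w') : Equiv w' w := by
  induction h with
  | refl => exact Relation.ReflTransGen.refl
  | tail _ h2 ih =>
    refine Relation.ReflTransGen.head ?_ ih
    rw [adj_iff] at h2 ⊢
    obtain ⟨u, a, b, v, rfl, rfl, hne, hcomp⟩ := h2
    exact ⟨u, b, a, v, rfl, rfl, hne.symm, hcomp.symm⟩

end PCWProof

namespace PCWProof

lemma mem_bASC_iff {w : List (List ℕ)} {i : ℕ} :
    i ∈ bASC w ↔ 0 < i ∧ i < w.length ∧ sb (w.getD (i-1) []) (w.getD i []) := by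
  unfold bASC
  constructor
  · rintro ⟨h, hi, hsb⟩
    refine ⟨hi, h, ?_⟩
    rw [List.getD_eq_getElem w [] (show i - 1 < w.length by omega),
      List.getD_eq_getElem w [] h]
    exact hsb
  · rintro ⟨hi, h, hsb⟩
    refine ⟨h, hi, ?_⟩
    rw [List.getD_eq_getElem w [] (show i - 1 < w.length by omega),
      List.getD_eq_getElem w [] h] at hsb
    exact hsb

lemma mem_bDES_iff {w : List (List ℕ)} {i : ℕ} :
    i ∈ bDES w ↔ 0 < i ∧ i < w.length ∧ sb (w.getD i []) (w.getD (i-1) []) := by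
  unfold bDES
  constructor
  · rintro ⟨h, hi, hsb⟩
    refine ⟨hi, h, ?_⟩
    rw [List.getD_eq_getElem w [] (show i - 1 < w.length by omega),
      List.getD_eq_getElem w [] h]
    exact hsb
  · rintro ⟨hi, h, hsb⟩
    refine ⟨h, hi, ?_⟩
    rw [List.getD_eq_getElem w [] (show i - 1 < w.length by omega),
      List.getD_eq_getElem w [] h] at hsb
    exact hsb

section mid
variable {u v : List (List ℕ)} {a b : List ℕ} {j : ℕ}

lemma getD_mid_left (h : j < u.length) : (u ++ a :: b :: v).getD j [] = u.getD j [] :=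
  List.getD_append _ _ _ _ h

lemma getD_mid_a : (u ++ a :: b :: v).getD u.length [] = a := by
  rw [List.getD_append_right _ _ _ _ (le_refl _), Nat.sub_self, List.getD_cons_zero]

lemma getD_mid_b : (u ++ a :: b :: v).getD (u.length + 1) [] = b := by
  rw [List.getD_append_right _ _ _ _ (by omega)]
  simp

lemma getD_mid_right (h : u.length + 2 ≤ j) :
    (u ++ a :: b :: v).getD j [] = v.getD (j - u.length - 2) [] := by
  rw [List.getD_append_right _ _ _ _ (by omega)]
  obtain ⟨k, hk⟩ : ∃ k, j - u.length = k + 2 := ⟨j - u.length - 2, by omega⟩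
  rw [hk, List.getD_cons_succ, List.getD_cons_succ]
  have : k + 2 - 2 = k := by omega
  rw [this]

end mid

def swapIdx (t j : ℕ) : ℕ := if j = t then t + 1 else if j = t + 1 then t else j

lemma swapIdx_swapIdx {t j : ℕ} : swapIdx t (swapIdx t j) = j := by
  unfold swapIdx; split_ifs <;> omega

lemma swapIdx_mono {t r1 r2 : ℕ} (h : r1 < r2) (hne : ¬(r1 = t ∧ r2 = t + 1)) :
    swapIdx t r1 < swapIdx t r2 := by
  unfold swapIdx; split_ifs <;> omega

lemma swapIdx_lt {t j n : ℕ} (h : j < n) (ht : t + 1 < n) : swapIdx t j < n := by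
  unfold swapIdx; split_ifs <;> omega

lemma getD_swap_eq {u v : List (List ℕ)} {a b : List ℕ} (j : ℕ) :
    (u ++ b :: a :: v).getD j [] = (u ++ a :: b :: v).getD (swapIdx u.length j) [] := by
  unfold swapIdx
  rcases lt_trichotomy j u.length with h | h | h
  · rw [if_neg (by omega), if_neg (by omega), getD_mid_left h, getD_mid_left h]
  · subst h
    rw [if_pos rfl, getD_mid_a, getD_mid_b]
  · rcases eq_or_lt_of_le (Nat.succ_le_of_lt h) with h2 | h2
    · rw [if_neg (by omega), if_pos h2.symm, getD_mid_a]
      have : j = u.length + 1 := by omega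
      subst this
      exact getD_mid_b
    · rw [if_neg (by omega), if_neg (by omega), getD_mid_right (by omega),
        getD_mid_right (by omega)]

open Classical in
/-- number of (not necessarily adjacent) ascending pairs -/
noncomputable def ascPairs (w : List (List ℕ)) : Finset (ℕ × ℕ) :=
  (Finset.range w.length ×ˢ Finset.range w.length).filter
    fun q => q.1 < q.2 ∧ sb (w.getD q.1 []) (w.getD q.2 [])

open Classical in
lemma mem_ascPairs {w : List (List ℕ)} {q : ℕ × ℕ} :
    q ∈ ascPairs w ↔ q.1 < q.2 ∧ q.2 < w.length ∧ sb (w.getD q.1 []) (w.getD q.2 []) := by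
  unfold ascPairs
  simp only [Finset.mem_filter, Finset.mem_product, Finset.mem_range]
  constructor
  · rintro ⟨⟨-, h2⟩, h3, h4⟩; exact ⟨h3, h2, h4⟩
  · rintro ⟨h3, h2, h4⟩; exact ⟨⟨by omega, h2⟩, h3, h4⟩

/-- the swap of an (adjacent) ascending pair decreases `ascPairs` -/
lemma ascPairs_lt {u v : List (List ℕ)} {a b : List ℕ} (ha : a ≠ []) (hb : b ≠ [])
    (hsb : sb a b) :
    (ascPairs (u ++ b :: a :: v)).card < (ascPairs (u ++ a :: b :: v)).card := by
  classical
  have hlt : u.length + 1 < (u ++ a :: b :: v).length := by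
    simp only [List.length_append, List.length_cons]; omega
  have hlen : (u ++ b :: a :: v).length = (u ++ a :: b :: v).length := by simp
  have hmem : (u.length, u.length + 1) ∈ ascPairs (u ++ a :: b :: v) := by
    rw [mem_ascPairs]
    refine ⟨by omega, hlt, ?_⟩
    rw [getD_mid_a, getD_mid_b]
    exact hsb
  have himage : ((ascPairs (u ++ b :: a :: v)).image
      fun q => (swapIdx u.length q.1, swapIdx u.length q.2))
      ⊆ (ascPairs (u ++ a :: b :: v)).erase (u.length, u.length + 1) := by
    intro q hq
    simp only [Finset.mem_image] at hq
    obtain ⟨r, hr, rfl⟩ := hq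
    rw [mem_ascPairs] at hr
    obtain ⟨h12, h2, hsb'⟩ := hr
    rw [getD_swap_eq (a := a) (b := b) r.1, getD_swap_eq (a := a) (b := b) r.2] at hsb'
    have hr2 : ¬ (r.1 = u.length ∧ r.2 = u.length + 1) := by
      rintro ⟨e1, e2⟩
      rw [e1, e2] at hsb'
      rw [show swapIdx u.length u.length = u.length + 1 by unfold swapIdx; split_ifs <;> omega,
        show swapIdx u.length (u.length+1) = u.length by unfold swapIdx; split_ifs <;> omega,
        getD_mid_a, getD_mid_b] at hsb'
      exact sb_asymm ha hb hsb hsb'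
    rw [Finset.mem_erase, mem_ascPairs]
    refine ⟨?_, swapIdx_mono h12 hr2, swapIdx_lt (by omega) hlt, hsb'⟩
    intro hcon
    have e1 : swapIdx u.length r.1 = u.length := congrArg Prod.fst hcon
    have e2 : swapIdx u.length r.2 = u.length + 1 := congrArg Prod.snd hcon
    have f1 : r.1 = u.length + 1 := by
      have := congrArg (swapIdx u.length) e1
      rw [swapIdx_swapIdx] at this
      rw [this]; unfold swapIdx; split_ifs <;> omega
    have f2 : r.2 = u.length := by
      have := congrArg (swapIdx u.length) e2
      rw [swapIdx_swapIdx] at this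
      rw [this]; unfold swapIdx; split_ifs <;> omega
    omega
  have hinj : Set.InjOn (fun q : ℕ × ℕ => (swapIdx u.length q.1, swapIdx u.length q.2))
      (ascPairs (u ++ b :: a :: v)) := by
    intro q _ r _ h
    have e1 := congrArg (fun z : ℕ × ℕ => swapIdx u.length z.1) h
    have e2 := congrArg (fun z : ℕ × ℕ => swapIdx u.length z.2) h
    simp only [swapIdx_swapIdx] at e1 e2
    exact Prod.ext e1 e2
  calc (ascPairs (u ++ b :: a :: v)).card
      = ((ascPairs (u ++ b :: a :: v)).image
          fun q => (swapIdx u.length q.1, swapIdx u.length q.2)).card :=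
        (Finset.card_image_of_injOn hinj).symm
    _ ≤ ((ascPairs (u ++ a :: b :: v)).erase (u.length, u.length + 1)).card :=
        Finset.card_le_card himage
    _ < (ascPairs (u ++ a :: b :: v)).card := Finset.card_erase_lt_of_mem hmem

end PCWProof

namespace PCWProof

open Classical in
/-- number of (not necessarily adjacent) descending pairs -/
noncomputable def desPairs (w : List (List ℕ)) : Finset (ℕ × ℕ) :=
  (Finset.range w.length ×ˢ Finset.range w.length).filter
    fun q => q.1 < q.2 ∧ sb (w.getD q.2 []) (w.getD q.1 [])

open Classical in
lemma mem_desPairs {w : List (List ℕ)} {q : ℕ × ℕ} :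
    q ∈ desPairs w ↔ q.1 < q.2 ∧ q.2 < w.length ∧ sb (w.getD q.2 []) (w.getD q.1 []) := by
  unfold desPairs
  simp only [Finset.mem_filter, Finset.mem_product, Finset.mem_range]
  constructor
  · rintro ⟨⟨-, h2⟩, h3, h4⟩; exact ⟨h3, h2, h4⟩
  · rintro ⟨h3, h2, h4⟩; exact ⟨⟨by omega, h2⟩, h3, h4⟩

/-- the swap of an (adjacent) descending pair decreases `desPairs` -/
lemma desPairs_lt {u v : List (List ℕ)} {a b : List ℕ} (ha : a ≠ []) (hb : b ≠ [])
    (hsb : sb b a) :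
    (desPairs (u ++ b :: a :: v)).card < (desPairs (u ++ a :: b :: v)).card := by
  classical
  have hlt : u.length + 1 < (u ++ a :: b :: v).length := by
    simp only [List.length_append, List.length_cons]; omega
  have hlen : (u ++ b :: a :: v).length = (u ++ a :: b :: v).length := by simp
  have hmem : (u.length, u.length + 1) ∈ desPairs (u ++ a :: b :: v) := by
    rw [mem_desPairs]
    refine ⟨by omega, hlt, ?_⟩
    rw [getD_mid_a, getD_mid_b]
    exact hsb
  have himage : ((desPairs (u ++ b :: a :: v)).image
      fun q => (swapIdx u.length q.1, swapIdx u.length q.2))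
      ⊆ (desPairs (u ++ a :: b :: v)).erase (u.length, u.length + 1) := by
    intro q hq
    simp only [Finset.mem_image] at hq
    obtain ⟨r, hr, rfl⟩ := hq
    rw [mem_desPairs] at hr
    obtain ⟨h12, h2, hsb'⟩ := hr
    rw [getD_swap_eq (a := a) (b := b) r.1, getD_swap_eq (a := a) (b := b) r.2] at hsb'
    have hr2 : ¬ (r.1 = u.length ∧ r.2 = u.length + 1) := by
      rintro ⟨e1, e2⟩
      rw [e1, e2] at hsb'
      rw [show swapIdx u.length u.length = u.length + 1 by unfold swapIdx; split_ifs <;> omega,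
        show swapIdx u.length (u.length+1) = u.length by unfold swapIdx; split_ifs <;> omega,
        getD_mid_a, getD_mid_b] at hsb'
      exact sb_asymm hb ha hsb hsb'
    rw [Finset.mem_erase, mem_desPairs]
    refine ⟨?_, swapIdx_mono h12 hr2, swapIdx_lt (by omega) hlt, hsb'⟩
    intro hcon
    have e1 : swapIdx u.length r.1 = u.length := congrArg Prod.fst hcon
    have e2 : swapIdx u.length r.2 = u.length + 1 := congrArg Prod.snd hcon
    have f1 : r.1 = u.length + 1 := by
      have := congrArg (swapIdx u.length) e1
      rw [swapIdx_swapIdx] at this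
      rw [this]; unfold swapIdx; split_ifs <;> omega
    have f2 : r.2 = u.length := by
      have := congrArg (swapIdx u.length) e2
      rw [swapIdx_swapIdx] at this
      rw [this]; unfold swapIdx; split_ifs <;> omega
    omega
  have hinj : Set.InjOn (fun q : ℕ × ℕ => (swapIdx u.length q.1, swapIdx u.length q.2))
      (desPairs (u ++ b :: a :: v)) := by
    intro q _ r _ h
    have e1 := congrArg (fun z : ℕ × ℕ => swapIdx u.length z.1) h
    have e2 := congrArg (fun z : ℕ × ℕ => swapIdx u.length z.2) h
    simp only [swapIdx_swapIdx] at e1 e2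
    exact Prod.ext e1 e2
  calc (desPairs (u ++ b :: a :: v)).card
      = ((desPairs (u ++ b :: a :: v)).image
          fun q => (swapIdx u.length q.1, swapIdx u.length q.2)).card :=
        (Finset.card_image_of_injOn hinj).symm
    _ ≤ ((desPairs (u ++ a :: b :: v)).erase (u.length, u.length + 1)).card :=
        Finset.card_le_card himage
    _ < (desPairs (u ++ a :: b :: v)).card := Finset.card_erase_lt_of_mem hmem

/-- decomposition of a word at an interior position -/
lemma word_decomp {w : List (List ℕ)} {i : ℕ} (h0 : 0 < i) (h : i < w.length) :
    w = w.take (i-1) ++ (w[i-1]'(by omega)) :: (w[i]'h) :: w.drop (i+1) := by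
  have h1 : w[i-1]'(by omega) :: w.drop i = w.drop (i-1) := by
    have := List.getElem_cons_drop (as := w) (i := i-1) (by omega)
    rwa [show i - 1 + 1 = i by omega] at this
  have h2 : (w[i]'h) :: w.drop (i+1) = w.drop i := List.getElem_cons_drop h
  rw [h2, h1, List.take_append_drop]

lemma exists_ascfree (T : Set ℕ) (w : List (List ℕ)) (hw : ∀ D ∈ w, D ≠ []) :
    ∃ z, EquivT T w z ∧ bASC z ⊆ T := by
  suffices h : ∀ N (w : List (List ℕ)), (ascPairs w).card ≤ N →
      (∀ D ∈ w, D ≠ []) → ∃ z, EquivT T w z ∧ bASC z ⊆ T from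
    h _ w le_rfl hw
  intro N
  induction N with
  | zero =>
    intro w hcard hw
    refine ⟨w, Relation.ReflTransGen.refl, ?_⟩
    intro i hi
    by_contra hiT
    rw [mem_bASC_iff] at hi
    have : (i-1, i) ∈ ascPairs w := mem_ascPairs.2 ⟨by omega, hi.2.1, hi.2.2⟩
    have := Finset.card_pos.2 ⟨_, this⟩
    omega
  | succ N ih =>
    intro w hcard hw
    by_cases hsub : bASC w ⊆ T
    · exact ⟨w, Relation.ReflTransGen.refl, hsub⟩
    · obtain ⟨i, hi, hiT⟩ := Set.not_subset.1 hsub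
      rw [mem_bASC_iff] at hi
      obtain ⟨h0, h, hsb⟩ := hi
      rw [List.getD_eq_getElem w [] (show i - 1 < w.length by omega),
        List.getD_eq_getElem w [] h] at hsb
      set a := w[i-1]'(by omega) with hA
      set b := w[i]'h with hB
      have ha : a ≠ [] := hw _ (List.getElem_mem _)
      have hb : b ≠ [] := hw _ (List.getElem_mem _)
      have hne : a ≠ b := by
        intro hab
        rw [hab] at hsb
        exact not_sb_self hb hsb
      have hdecomp := word_decomp h0 h
      have hlen : (w.take (i-1)).length = i - 1 :=
        List.length_take_of_le (by omega)
      have hstep : AdjT T w (w.take (i-1) ++ b :: a :: w.drop (i+1)) := by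
        refine ⟨w.take (i-1), a, b, w.drop (i+1), hdecomp, rfl, hne, Or.inl hsb, ?_⟩
        rw [hlen]
        rwa [show i - 1 + 1 = i by omega]
      have hcard' : (ascPairs (w.take (i-1) ++ b :: a :: w.drop (i+1))).card ≤ N := by
        have := ascPairs_lt (u := w.take (i-1)) (v := w.drop (i+1)) ha hb hsb
        rw [← hdecomp] at this
        omega
      have hw' : ∀ D ∈ (w.take (i-1) ++ b :: a :: w.drop (i+1)), D ≠ [] := by
        intro D hD
        exact hw D ((adj_perm hstep.adj).symm.subset hD)
      obtain ⟨z, hz1, hz2⟩ := ih _ hcard' hw'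
      exact ⟨z, Relation.ReflTransGen.head hstep hz1, hz2⟩

lemma exists_desfree (T : Set ℕ) (w : List (List ℕ)) (hw : ∀ D ∈ w, D ≠ []) :
    ∃ z, EquivT T w z ∧ bDES z ⊆ T := by
  suffices h : ∀ N (w : List (List ℕ)), (desPairs w).card ≤ N →
      (∀ D ∈ w, D ≠ []) → ∃ z, EquivT T w z ∧ bDES z ⊆ T from
    h _ w le_rfl hw
  intro N
  induction N with
  | zero =>
    intro w hcard hw
    refine ⟨w, Relation.ReflTransGen.refl, ?_⟩
    intro i hi
    by_contra hiT
    rw [mem_bDES_iff] at hi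
    have : (i-1, i) ∈ desPairs w := mem_desPairs.2 ⟨by omega, hi.2.1, hi.2.2⟩
    have := Finset.card_pos.2 ⟨_, this⟩
    omega
  | succ N ih =>
    intro w hcard hw
    by_cases hsub : bDES w ⊆ T
    · exact ⟨w, Relation.ReflTransGen.refl, hsub⟩
    · obtain ⟨i, hi, hiT⟩ := Set.not_subset.1 hsub
      rw [mem_bDES_iff] at hi
      obtain ⟨h0, h, hsb⟩ := hi
      rw [List.getD_eq_getElem w [] (show i - 1 < w.length by omega),
        List.getD_eq_getElem w [] h] at hsb
      set a := w[i-1]'(by omega) with hA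
      set b := w[i]'h with hB
      have ha : a ≠ [] := hw _ (List.getElem_mem _)
      have hb : b ≠ [] := hw _ (List.getElem_mem _)
      have hne : a ≠ b := by
        intro hab
        rw [hab] at hsb
        exact not_sb_self hb hsb
      have hdecomp := word_decomp h0 h
      have hlen : (w.take (i-1)).length = i - 1 :=
        List.length_take_of_le (by omega)
      have hstep : AdjT T w (w.take (i-1) ++ b :: a :: w.drop (i+1)) := by
        refine ⟨w.take (i-1), a, b, w.drop (i+1), hdecomp, rfl, hne, Or.inr hsb, ?_⟩
        rw [hlen]
        rwa [show i - 1 + 1 = i by omega]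
      have hcard' : (desPairs (w.take (i-1) ++ b :: a :: w.drop (i+1))).card ≤ N := by
        have := desPairs_lt (u := w.take (i-1)) (v := w.drop (i+1)) ha hb hsb
        rw [← hdecomp] at this
        omega
      have hw' : ∀ D ∈ (w.take (i-1) ++ b :: a :: w.drop (i+1)), D ≠ [] := by
        intro D hD
        exact hw D ((adj_perm hstep.adj).symm.subset hD)
      obtain ⟨z, hz1, hz2⟩ := ih _ hcard' hw'
      exact ⟨z, Relation.ReflTransGen.head hstep hz1, hz2⟩

end PCWProof

namespace PCWProof

/-- projection of a word to the letters `x` and `y` -/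
def depProj (x y : List ℕ) (w : List (List ℕ)) : List (List ℕ) :=
  w.filter (fun c => decide (c = x ∨ c = y))

lemma depProj_adj {x y : List ℕ} (hxy : ¬ (x ≠ y ∧ (sb x y ∨ sb y x)))
    {w w' : List (List ℕ)} (h : Adj w w') : depProj x y w = depProj x y w' := by
  rw [adj_iff] at h
  obtain ⟨u, a, b, v, rfl, rfl, hne, hcomp⟩ := h
  unfold depProj
  rw [List.filter_append, List.filter_append]
  congr 1
  by_cases pa : (a = x ∨ a = y) <;> by_cases pb : (b = x ∨ b = y)
  · exfalso
    apply hxy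
    rcases pa with rfl | rfl <;> rcases pb with rfl | rfl
    · exact absurd rfl hne
    · exact ⟨hne, hcomp⟩
    · exact ⟨hne.symm, hcomp.symm⟩
    · exact absurd rfl hne
  · simp [List.filter_cons, pa, pb]
  · simp [List.filter_cons, pa, pb]
  · simp [List.filter_cons, pa, pb]

lemma depProj_equiv {x y : List ℕ} (hxy : ¬ (x ≠ y ∧ (sb x y ∨ sb y x)))
    {w w' : List (List ℕ)} (h : PCW.Equiv w w') : depProj x y w = depProj x y w' := by
  induction h with
  | refl => rfl
  | tail _ h2 ih => exact ih.trans (depProj_adj hxy h2)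

lemma bASC_cons {w : List (List ℕ)} {c : List ℕ} {i : ℕ} (h : i ∈ bASC w) :
    (i + 1) ∈ bASC (c :: w) := by
  rw [mem_bASC_iff] at h ⊢
  obtain ⟨h0, hl, hsb⟩ := h
  refine ⟨by omega, by simp; omega, ?_⟩
  rw [Nat.add_sub_cancel, List.getD_cons_succ]
  rw [show i = (i - 1) + 1 by omega, List.getD_cons_succ]
  rw [show i - 1 + 1 = i by omega]
  exact hsb

lemma bDES_cons {w : List (List ℕ)} {c : List ℕ} {i : ℕ} (h : i ∈ bDES w) :
    (i + 1) ∈ bDES (c :: w) := by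
  rw [mem_bDES_iff] at h ⊢
  obtain ⟨h0, hl, hsb⟩ := h
  refine ⟨by omega, by simp; omega, ?_⟩
  rw [Nat.add_sub_cancel, List.getD_cons_succ]
  rw [show i = (i - 1) + 1 by omega, List.getD_cons_succ]
  rw [show i - 1 + 1 = i by omega]
  exact hsb

lemma exists_greatest {P : ℕ → Prop} : ∀ {n : ℕ}, (∃ j, j ≤ n ∧ P j) →
    ∃ j, j ≤ n ∧ P j ∧ ∀ j', j < j' → j' ≤ n → ¬ P j' := by
  intro n
  induction n with
  | zero =>
    rintro ⟨j, hj, hP⟩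
    interval_cases j
    exact ⟨0, le_rfl, hP, fun j' h1 h2 => by omega⟩
  | succ n ih =>
    rintro ⟨j, hj, hP⟩
    by_cases hPn : P (n+1)
    · exact ⟨n+1, le_rfl, hPn, fun j' h1 h2 => by omega⟩
    · have hjn : j ≤ n := by
        rcases Nat.lt_or_ge j (n+1) with h | h
        · omega
        · exfalso; exact hPn (by rwa [show n + 1 = j by omega])
      obtain ⟨j0, h0, hPj0, hmax⟩ := ih ⟨j, hjn, hP⟩
      refine ⟨j0, by omega, hPj0, ?_⟩
      intro j' h1 h2
      rcases Nat.lt_or_ge j' (n+1) with h | h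
      · exact hmax j' h1 (by omega)
      · rwa [show j' = n + 1 by omega]

open Classical in
/-- Core contradiction: in an ascent-free word `v` starting with `b`, if `a ≠ b`
lies entirely above `b`, occurs in `v`, and for every letter `x` incomparable
with `a` some `a` occurs before all `x`'s, we get a contradiction. -/
lemma asc_head_contra {v : List (List ℕ)} {a b : List ℕ} {v' : List (List ℕ)}
    (hv : v = b :: v') (hmem : a ∈ v) (hab : a ≠ b) (hsb : sb b a)
    (hnonempty : ∀ D ∈ v, D ≠ [])
    (hasc : ∀ i, i ∉ bASC v)
    (hfirst : ∀ x, x ≠ a → ¬ (sb a x ∨ sb x a) →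
      ∃ j, j < v.length ∧ v.getD j [] = a ∧
        ∀ j' < j, ¬(v.getD j' [] = a ∨ v.getD j' [] = x)) : False := by
  have ha : a ≠ [] := hnonempty a hmem
  have hex : ∃ n, n < v.length ∧ v.getD n [] = a := by
    obtain ⟨n, hn, he⟩ := List.getElem_of_mem hmem
    exact ⟨n, hn, by rw [List.getD_eq_getElem v [] hn]; exact he⟩
  obtain ⟨k, hklt, hka, hkmin'⟩ :
      ∃ k, k < v.length ∧ v.getD k [] = a ∧ ∀ n, n < v.length ∧ v.getD n [] = a → k ≤ n :=
    ⟨Nat.find hex, (Nat.find_spec hex).1, (Nat.find_spec hex).2,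
      fun n hn => Nat.find_min' hex hn⟩
  have hkmin : ∀ j < k, v.getD j [] ≠ a := by
    intro j hj he
    rcases Nat.lt_or_ge j v.length with h | h
    · have := hkmin' j ⟨h, he⟩; omega
    · rw [List.getD_eq_default _ _ h] at he
      exact ha he.symm
  have hk0 : 0 < k := by
    rcases Nat.eq_zero_or_pos k with h | h
    · exfalso
      rw [h, hv, List.getD_cons_zero] at hka
      exact hab hka.symm
    · exact h
  -- every letter before position k is comparable with a
  have hcomp : ∀ j < k, sb (v.getD j []) a ∨ sb a (v.getD j []) := by
    intro j hj
    by_contra hcon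
    push_neg at hcon
    have hxa : v.getD j [] ≠ a := hkmin j hj
    obtain ⟨ja, hjalt, hjaa, hjamin⟩ := hfirst (v.getD j []) hxa
      (by rw [not_or]; exact ⟨hcon.2, hcon.1⟩)
    have hkja : k ≤ ja := hkmin' ja ⟨hjalt, hjaa⟩
    exact hjamin j (by omega) (Or.inr rfl)
  -- the largest position < k whose letter is below a
  obtain ⟨js, hjsle, hQjs, hmax⟩ := exists_greatest (P := fun j => sb (v.getD j []) a)
    (n := k - 1) ⟨0, by omega, by show sb (v.getD 0 []) a; rw [hv, List.getD_cons_zero]; exact hsb⟩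
  have hjsk : js + 1 ≤ k := by omega
  rcases eq_or_lt_of_le hjsk with he | hlt2
  · -- ascent at position k
    apply hasc k
    rw [mem_bASC_iff]
    refine ⟨hk0, hklt, ?_⟩
    rw [show k - 1 = js by omega, hka]
    exact hQjs
  · -- letter at js+1 is above a, giving an ascent at js+1
    have hx := hcomp (js+1) (by omega)
    rcases hx with hx | hx
    · exact hmax (js+1) (by omega) (by omega) hx
    · apply hasc (js + 1)
      rw [mem_bASC_iff]
      refine ⟨by omega, by omega, ?_⟩
      rw [Nat.add_sub_cancel]
      exact sb_trans ha hQjs hx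

/-- `hfirst` hypothesis extraction from the projection invariants. -/
lemma hfirst_of_proj {u v : List (List ℕ)} {a : List ℕ} {u' : List (List ℕ)}
    (hu : u = a :: u')
    (hproj : ∀ x y, ¬ (x ≠ y ∧ (sb x y ∨ sb y x)) → depProj x y u = depProj x y v) :
    ∀ x, x ≠ a → ¬ (sb a x ∨ sb x a) →
      ∃ j, j < v.length ∧ v.getD j [] = a ∧
        ∀ j' < j, ¬(v.getD j' [] = a ∨ v.getD j' [] = x) := by
  intro x hxa hcomp
  have hp := hproj a x (by rintro ⟨h1, h2⟩; exact hcomp h2)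
  rw [hu] at hp
  unfold depProj at hp
  rw [List.filter_cons_of_pos (by simp)] at hp
  obtain ⟨l₁, l₂, hv2, hl₁, -, -⟩ := List.filter_eq_cons_iff.1 hp.symm
  refine ⟨l₁.length, ?_, ?_, ?_⟩
  · rw [hv2]
    simp
  · rw [hv2, List.getD_append_right _ _ _ _ (le_refl _), Nat.sub_self, List.getD_cons_zero]
  · intro j' hj' hor
    have hj'2 : j' < l₁.length := hj'
    have : v.getD j' [] = l₁.getD j' [] := by
      rw [hv2]; exact List.getD_append _ _ _ _ hj'2
    rw [this] at hor
    have hmem : l₁.getD j' [] ∈ l₁ := by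
      rw [List.getD_eq_getElem l₁ [] hj'2]
      exact List.getElem_mem _
    have := hl₁ _ hmem
    simp only [decide_eq_true_eq] at this
    exact this hor

/-- Uniqueness of the ascent-free representative. -/
lemma ascfree_unique : ∀ (u v : List (List ℕ)), u.Perm v →
    (∀ x y, ¬ (x ≠ y ∧ (sb x y ∨ sb y x)) → depProj x y u = depProj x y v) →
    (∀ D ∈ u, D ≠ []) →
    (∀ i, i ∉ bASC u) → (∀ i, i ∉ bASC v) → u = v := by
  intro u
  induction u with
  | nil =>
    intro v hperm _ _ _ _
    exact (List.Perm.nil_eq hperm).symm.symm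
  | cons a u' ih =>
    intro v hperm hproj hne hau hav
    rcases v with _ | ⟨b, v'⟩
    · exact absurd hperm.symm (by simp)
    by_cases hab : a = b
    · subst hab
      have htail : u' = v' := by
        apply ih v' (hperm.cons_inv) _ _ _ _
        · intro x y hxy
          have := hproj x y hxy
          unfold depProj at this ⊢
          rw [List.filter_cons, List.filter_cons] at this
          split_ifs at this with h
          · exact List.tail_eq_of_cons_eq this
          · exact this
        · intro D hD; exact hne D (List.mem_cons_of_mem _ hD)
        · intro i hi; exact hau (i+1) (bASC_cons hi)
        · intro i hi; exact hav (i+1) (bASC_cons hi)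
      rw [htail]
    · exfalso
      -- a and b must be comparable
      by_cases hcomp : sb a b ∨ sb b a
      · rcases hcomp with h | h
        · -- sb a b : apply the contradiction inside u, pivot b
          refine asc_head_contra (v := a :: u') (a := b) (b := a) (v' := u') rfl
            ?_ (Ne.symm hab) h hne hau ?_
          · exact hperm.symm.subset List.mem_cons_self
          · exact hfirst_of_proj (u := b :: v') rfl
              (fun x y hxy => (hproj x y hxy).symm)
        · -- sb b a : contradiction inside v, pivot a
          refine asc_head_contra (v := b :: v') (a := a) (b := b) (v' := v') rfl
            ?_ hab h ?_ hav ?_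
          · exact hperm.subset List.mem_cons_self
          · intro D hD; exact hne D (hperm.symm.subset hD)
          · exact hfirst_of_proj (u := a :: u') rfl hproj
      · -- dependent: heads of the projections disagree
        have hp := hproj a b (by rintro ⟨h1, h2⟩; exact hcomp h2)
        unfold depProj at hp
        rw [List.filter_cons_of_pos (by simp), List.filter_cons_of_pos (by simp)] at hp
        exact hab (List.head_eq_of_cons_eq hp)

end PCWProof

namespace PCWProof

open Classical in
/-- Mirror of `asc_head_contra` for descent-free words. -/
lemma des_head_contra {v : List (List ℕ)} {a b : List ℕ} {v' : List (List ℕ)}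
    (hv : v = b :: v') (hmem : a ∈ v) (hab : a ≠ b) (hsb : sb a b)
    (hnonempty : ∀ D ∈ v, D ≠ [])
    (hdes : ∀ i, i ∉ bDES v)
    (hfirst : ∀ x, x ≠ a → ¬ (sb a x ∨ sb x a) →
      ∃ j, j < v.length ∧ v.getD j [] = a ∧
        ∀ j' < j, ¬(v.getD j' [] = a ∨ v.getD j' [] = x)) : False := by
  have ha : a ≠ [] := hnonempty a hmem
  have hex : ∃ n, n < v.length ∧ v.getD n [] = a := by
    obtain ⟨n, hn, he⟩ := List.getElem_of_mem hmem
    exact ⟨n, hn, by rw [List.getD_eq_getElem v [] hn]; exact he⟩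
  obtain ⟨k, hklt, hka, hkmin'⟩ :
      ∃ k, k < v.length ∧ v.getD k [] = a ∧ ∀ n, n < v.length ∧ v.getD n [] = a → k ≤ n :=
    ⟨Nat.find hex, (Nat.find_spec hex).1, (Nat.find_spec hex).2,
      fun n hn => Nat.find_min' hex hn⟩
  have hkmin : ∀ j < k, v.getD j [] ≠ a := by
    intro j hj he
    rcases Nat.lt_or_ge j v.length with h | h
    · have := hkmin' j ⟨h, he⟩; omega
    · rw [List.getD_eq_default _ _ h] at he
      exact ha he.symm
  have hk0 : 0 < k := by
    rcases Nat.eq_zero_or_pos k with h | h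
    · exfalso
      rw [h, hv, List.getD_cons_zero] at hka
      exact hab hka.symm
    · exact h
  have hcomp : ∀ j < k, sb (v.getD j []) a ∨ sb a (v.getD j []) := by
    intro j hj
    by_contra hcon
    push_neg at hcon
    have hxa : v.getD j [] ≠ a := hkmin j hj
    obtain ⟨ja, hjalt, hjaa, hjamin⟩ := hfirst (v.getD j []) hxa
      (by rw [not_or]; exact ⟨hcon.2, hcon.1⟩)
    have hkja : k ≤ ja := hkmin' ja ⟨hjalt, hjaa⟩
    exact hjamin j (by omega) (Or.inr rfl)
  -- the largest position < k whose letter is above a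
  obtain ⟨js, hjsle, hQjs, hmax⟩ := exists_greatest (P := fun j => sb a (v.getD j []))
    (n := k - 1) ⟨0, by omega, by show sb a (v.getD 0 []); rw [hv, List.getD_cons_zero]; exact hsb⟩
  have hjsk : js + 1 ≤ k := by omega
  rcases eq_or_lt_of_le hjsk with he | hlt2
  · -- descent at position k
    apply hdes k
    rw [mem_bDES_iff]
    refine ⟨hk0, hklt, ?_⟩
    rw [show k - 1 = js by omega, hka]
    exact hQjs
  · have hx := hcomp (js+1) (by omega)
    rcases hx with hx | hx
    · apply hdes (js + 1)
      rw [mem_bDES_iff]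
      refine ⟨by omega, by omega, ?_⟩
      rw [Nat.add_sub_cancel]
      exact sb_trans ha hx hQjs
    · exact hmax (js+1) (by omega) (by omega) hx

/-- Uniqueness of the descent-free representative. -/
lemma desfree_unique : ∀ (u v : List (List ℕ)), u.Perm v →
    (∀ x y, ¬ (x ≠ y ∧ (sb x y ∨ sb y x)) → depProj x y u = depProj x y v) →
    (∀ D ∈ u, D ≠ []) →
    (∀ i, i ∉ bDES u) → (∀ i, i ∉ bDES v) → u = v := by
  intro u
  induction u with
  | nil =>
    intro v hperm _ _ _ _
    exact (List.Perm.nil_eq hperm).symm.symm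
  | cons a u' ih =>
    intro v hperm hproj hne hau hav
    rcases v with _ | ⟨b, v'⟩
    · exact absurd hperm.symm (by simp)
    by_cases hab : a = b
    · subst hab
      have htail : u' = v' := by
        apply ih v' (hperm.cons_inv) _ _ _ _
        · intro x y hxy
          have := hproj x y hxy
          unfold depProj at this ⊢
          rw [List.filter_cons, List.filter_cons] at this
          split_ifs at this with h
          · exact List.tail_eq_of_cons_eq this
          · exact this
        · intro D hD; exact hne D (List.mem_cons_of_mem _ hD)
        · intro i hi; exact hau (i+1) (bDES_cons hi)
        · intro i hi; exact hav (i+1) (bDES_cons hi)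
      rw [htail]
    · exfalso
      by_cases hcomp : sb a b ∨ sb b a
      · rcases hcomp with h | h
        · -- sb a b : contradiction inside v, pivot a
          refine des_head_contra (v := b :: v') (a := a) (b := b) (v' := v') rfl
            ?_ hab h ?_ hav ?_
          · exact hperm.subset List.mem_cons_self
          · intro D hD; exact hne D (hperm.symm.subset hD)
          · exact hfirst_of_proj (u := a :: u') rfl hproj
        · -- sb b a : contradiction inside u, pivot b
          refine des_head_contra (v := a :: u') (a := b) (b := a) (v' := u') rfl
            ?_ (Ne.symm hab) h hne hau ?_
          · exact hperm.symm.subset List.mem_cons_self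
          · exact hfirst_of_proj (u := b :: v') rfl
              (fun x y hxy => (hproj x y hxy).symm)
      · have hp := hproj a b (by rintro ⟨h1, h2⟩; exact hcomp h2)
        unfold depProj at hp
        rw [List.filter_cons_of_pos (by simp), List.filter_cons_of_pos (by simp)] at hp
        exact hab (List.head_eq_of_cons_eq hp)

end PCWProof

namespace PCWProof

lemma getD_take {w : List (List ℕ)} {t j : ℕ} (h : j < t) :
    (w.take t).getD j [] = w.getD j [] := by
  rcases Nat.lt_or_ge j w.length with hl | hl
  · rw [List.getD_eq_getElem _ [] (show j < (w.take t).length by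
      rw [List.length_take]; omega), List.getD_eq_getElem _ [] hl]
    exact List.getElem_take
  · rw [List.getD_eq_default _ _ hl, List.getD_eq_default]
    rw [List.length_take]; omega

lemma getD_drop {w : List (List ℕ)} {t j : ℕ} :
    (w.drop t).getD j [] = w.getD (t + j) [] := by
  rcases Nat.lt_or_ge (t + j) w.length with hl | hl
  · rw [List.getD_eq_getElem _ [] (show j < (w.drop t).length by
      rw [List.length_drop]; omega), List.getD_eq_getElem _ [] hl]
    exact List.getElem_drop
  · rw [List.getD_eq_default _ _ hl, List.getD_eq_default]
    rw [List.length_drop]; omega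

lemma bASC_take {w : List (List ℕ)} {t i : ℕ} (h : i ∈ bASC (w.take t)) : i ∈ bASC w := by
  rw [mem_bASC_iff] at h ⊢
  obtain ⟨h0, hl, hsb⟩ := h
  rw [List.length_take] at hl
  rw [getD_take (by omega), getD_take (by omega)] at hsb
  exact ⟨h0, by omega, hsb⟩

lemma bDES_take {w : List (List ℕ)} {t i : ℕ} (h : i ∈ bDES (w.take t)) : i ∈ bDES w := by
  rw [mem_bDES_iff] at h ⊢
  obtain ⟨h0, hl, hsb⟩ := h
  rw [List.length_take] at hl
  rw [getD_take (by omega), getD_take (by omega)] at hsb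
  exact ⟨h0, by omega, hsb⟩

lemma bASC_drop {w : List (List ℕ)} {t i : ℕ} (h : i ∈ bASC (w.drop t)) :
    (i + t) ∈ bASC w := by
  rw [mem_bASC_iff] at h ⊢
  obtain ⟨h0, hl, hsb⟩ := h
  rw [List.length_drop] at hl
  rw [getD_drop, getD_drop] at hsb
  rw [show t + (i-1) = i + t - 1 by omega, show t + i = i + t by omega] at hsb
  exact ⟨by omega, by omega, hsb⟩

lemma bDES_drop {w : List (List ℕ)} {t i : ℕ} (h : i ∈ bDES (w.drop t)) :
    (i + t) ∈ bDES w := by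
  rw [mem_bDES_iff] at h ⊢
  obtain ⟨h0, hl, hsb⟩ := h
  rw [List.length_drop] at hl
  rw [getD_drop, getD_drop] at hsb
  rw [show t + (i-1) = i + t - 1 by omega, show t + i = i + t by omega] at hsb
  exact ⟨by omega, by omega, hsb⟩

lemma adjT_split {T : Set ℕ} {t : ℕ} (ht : t ∈ T) {w w' : List (List ℕ)}
    (h : AdjT T w w') :
    (AdjT T (w.take t) (w'.take t) ∧ w.drop t = w'.drop t) ∨
    (w.take t = w'.take t ∧ AdjT {s | s + t ∈ T} (w.drop t) (w'.drop t)) := by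
  obtain ⟨u, a, b, v, rfl, rfl, hne, hcomp, hT⟩ := h
  have hit : u.length + 1 ≠ t := fun he => hT (he ▸ ht)
  rcases Nat.lt_or_ge u.length t with h1 | h1
  · -- t ≥ u.length + 2 : swap inside the take part
    have h2 : u.length + 2 ≤ t := by omega
    obtain ⟨s, rfl⟩ : ∃ s, t = u.length + 2 + s := ⟨t - u.length - 2, by omega⟩
    left
    constructor
    · have e1 : (u ++ a :: b :: v).take (u.length + 2 + s) =
          u ++ a :: b :: v.take s := by
        rw [List.take_append, List.take_of_length_le (by omega),
          show u.length + 2 + s - u.length = s + 1 + 1 by omega,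
          List.take_succ_cons, List.take_succ_cons]
      have e2 : (u ++ b :: a :: v).take (u.length + 2 + s) =
          u ++ b :: a :: v.take s := by
        rw [List.take_append, List.take_of_length_le (by omega),
          show u.length + 2 + s - u.length = s + 1 + 1 by omega,
          List.take_succ_cons, List.take_succ_cons]
      rw [e1, e2]
      exact ⟨u, a, b, v.take s, rfl, rfl, hne, hcomp, hT⟩
    · rw [List.drop_append, List.drop_append,
        show u.length + 2 + s - u.length = s + 1 + 1 by omega]
      simp [List.drop_succ_cons]
  · -- t ≤ u.length : swap inside the drop part
    right
    constructor
    · rw [List.take_append_of_le_length h1, List.take_append_of_le_length h1]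
    · have e1 : (u ++ a :: b :: v).drop t = u.drop t ++ a :: b :: v := by
        rw [List.drop_append, Nat.sub_eq_zero_of_le h1, List.drop_zero]
      have e2 : (u ++ b :: a :: v).drop t = u.drop t ++ b :: a :: v := by
        rw [List.drop_append, Nat.sub_eq_zero_of_le h1, List.drop_zero]
      rw [e1, e2]
      refine ⟨u.drop t, a, b, v, rfl, rfl, hne, hcomp, ?_⟩
      rw [List.length_drop]
      intro hc
      rw [Set.mem_setOf_eq] at hc
      rw [show u.length - t + 1 + t = u.length + 1 by omega] at hc
      exact hT hc

lemma equivT_split {T : Set ℕ} {t : ℕ} (ht : t ∈ T) {w w' : List (List ℕ)}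
    (h : EquivT T w w') :
    EquivT T (w.take t) (w'.take t) ∧ EquivT {s | s + t ∈ T} (w.drop t) (w'.drop t) := by
  induction h with
  | refl => exact ⟨Relation.ReflTransGen.refl, Relation.ReflTransGen.refl⟩
  | tail _ h2 ih =>
    rcases adjT_split ht h2 with ⟨ha, hb⟩ | ⟨ha, hb⟩
    · exact ⟨ih.1.tail ha, hb ▸ ih.2⟩
    · exact ⟨ha ▸ ih.1, ih.2.tail hb⟩

open Classical in
lemma ascfreeT_unique : ∀ (N : ℕ) (T : Set ℕ) (w w' : List (List ℕ)),
    w.length ≤ N → EquivT T w w' → (∀ D ∈ w, D ≠ []) →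
    bASC w ⊆ T → bASC w' ⊆ T → w = w' := by
  intro N
  induction N with
  | zero =>
    intro T w w' hlen h _ _ _
    have hl2 := (equiv_perm h.equiv).length_eq
    have hw : w = [] := List.length_eq_zero_iff.1 (by omega)
    have hw' : w' = [] := List.length_eq_zero_iff.1 (by omega)
    rw [hw, hw']
  | succ N ih =>
    intro T w w' hlen h hne h1 h2
    have hlen' : w'.length = w.length := (equiv_perm h.equiv).length_eq.symm
    by_cases hT : ∃ t, t ∈ T ∧ 1 ≤ t ∧ t < w.length
    · obtain ⟨t, htT, ht1, htlen⟩ := hT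
      have hex : ∃ t, t ∈ T ∧ 1 ≤ t ∧ t < w.length := ⟨t, htT, ht1, htlen⟩
      set t0 := Nat.find hex with ht0
      obtain ⟨ht0T, ht01, ht0len⟩ := Nat.find_spec hex
      obtain ⟨hsp1, hsp2⟩ := equivT_split ht0T h
      -- take parts : no allowed cut below t0, so ascent free
      have htake : w.take t0 = w'.take t0 := by
        apply ascfree_unique _ _ (equiv_perm hsp1.equiv)
          (fun x y hxy => depProj_equiv hxy hsp1.equiv)
          (fun D hD => hne D (List.mem_of_mem_take hD))
        · intro i hi
          have hiw := bASC_take hi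
          have hiT := h1 hiw
          rw [mem_bASC_iff] at hi
          have : i < t0 := by
            have := hi.2.1
            rw [List.length_take] at this
            omega
          exact absurd (Nat.find_min' hex ⟨hiT, by omega, by omega⟩) (by omega)
        · intro i hi
          have hiw := bASC_take hi
          have hiT := h2 hiw
          rw [mem_bASC_iff] at hi
          have : i < t0 := by
            have := hi.2.1
            rw [List.length_take] at this
            omega
          have hiwlen : i < w.length := by omega
          exact absurd (Nat.find_min' hex ⟨hiT, by omega, by omega⟩) (by omega)
      -- drop parts : recursion
      have hdrop : w.drop t0 = w'.drop t0 := by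
        refine ih {s | s + t0 ∈ T} (w.drop t0) (w'.drop t0) ?_ hsp2
          (fun D hD => hne D (List.mem_of_mem_drop hD)) ?_ ?_
        · rw [List.length_drop]; omega
        · intro i hi
          exact h1 (bASC_drop hi)
        · intro i hi
          exact h2 (bASC_drop hi)
      calc w = w.take t0 ++ w.drop t0 := (List.take_append_drop _ _).symm
        _ = w'.take t0 ++ w'.drop t0 := by rw [htake, hdrop]
        _ = w' := List.take_append_drop _ _
    · push_neg at hT
      apply ascfree_unique _ _ (equiv_perm h.equiv)
        (fun x y hxy => depProj_equiv hxy h.equiv) hne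
      · intro i hi
        rw [mem_bASC_iff] at hi
        exact absurd (h1 (mem_bASC_iff.2 hi)) (by
          intro hc
          have := hT i hc
          omega)
      · intro i hi
        rw [mem_bASC_iff] at hi
        exact absurd (h2 (mem_bASC_iff.2 hi)) (by
          intro hc
          have := hT i hc
          omega)

open Classical in
lemma desfreeT_unique : ∀ (N : ℕ) (T : Set ℕ) (w w' : List (List ℕ)),
    w.length ≤ N → EquivT T w w' → (∀ D ∈ w, D ≠ []) →
    bDES w ⊆ T → bDES w' ⊆ T → w = w' := by
  intro N
  induction N with
  | zero =>
    intro T w w' hlen h _ _ _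
    have hl2 := (equiv_perm h.equiv).length_eq
    have hw : w = [] := List.length_eq_zero_iff.1 (by omega)
    have hw' : w' = [] := List.length_eq_zero_iff.1 (by omega)
    rw [hw, hw']
  | succ N ih =>
    intro T w w' hlen h hne h1 h2
    have hlen' : w'.length = w.length := (equiv_perm h.equiv).length_eq.symm
    by_cases hT : ∃ t, t ∈ T ∧ 1 ≤ t ∧ t < w.length
    · obtain ⟨t, htT, ht1, htlen⟩ := hT
      have hex : ∃ t, t ∈ T ∧ 1 ≤ t ∧ t < w.length := ⟨t, htT, ht1, htlen⟩
      set t0 := Nat.find hex with ht0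
      obtain ⟨ht0T, ht01, ht0len⟩ := Nat.find_spec hex
      obtain ⟨hsp1, hsp2⟩ := equivT_split ht0T h
      have htake : w.take t0 = w'.take t0 := by
        apply desfree_unique _ _ (equiv_perm hsp1.equiv)
          (fun x y hxy => depProj_equiv hxy hsp1.equiv)
          (fun D hD => hne D (List.mem_of_mem_take hD))
        · intro i hi
          have hiw := bDES_take hi
          have hiT := h1 hiw
          rw [mem_bDES_iff] at hi
          have : i < t0 := by
            have := hi.2.1
            rw [List.length_take] at this
            omega
          exact absurd (Nat.find_min' hex ⟨hiT, by omega, by omega⟩) (by omega)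
        · intro i hi
          have hiw := bDES_take hi
          have hiT := h2 hiw
          rw [mem_bDES_iff] at hi
          have : i < t0 := by
            have := hi.2.1
            rw [List.length_take] at this
            omega
          have hiwlen : i < w.length := by omega
          exact absurd (Nat.find_min' hex ⟨hiT, by omega, by omega⟩) (by omega)
      have hdrop : w.drop t0 = w'.drop t0 := by
        refine ih {s | s + t0 ∈ T} (w.drop t0) (w'.drop t0) ?_ hsp2
          (fun D hD => hne D (List.mem_of_mem_drop hD)) ?_ ?_
        · rw [List.length_drop]; omega
        · intro i hi
          exact h1 (bDES_drop hi)
        · intro i hi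
          exact h2 (bDES_drop hi)
      calc w = w.take t0 ++ w.drop t0 := (List.take_append_drop _ _).symm
        _ = w'.take t0 ++ w'.drop t0 := by rw [htake, hdrop]
        _ = w' := List.take_append_drop _ _
    · push_neg at hT
      apply desfree_unique _ _ (equiv_perm h.equiv)
        (fun x y hxy => depProj_equiv hxy h.equiv) hne
      · intro i hi
        rw [mem_bDES_iff] at hi
        exact absurd (h1 (mem_bDES_iff.2 hi)) (by
          intro hc
          have := hT i hc
          omega)
      · intro i hi
        rw [mem_bDES_iff] at hi
        exact absurd (h2 (mem_bDES_iff.2 hi)) (by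
          intro hc
          have := hT i hc
          omega)

end PCWProof

namespace PCWProof

noncomputable def ascNF (T : Set ℕ) (w : List (List ℕ)) : List (List ℕ) :=
  if h : ∀ D ∈ w, D ≠ [] then Classical.choose (exists_ascfree T w h) else w

lemma ascNF_spec {T : Set ℕ} {w : List (List ℕ)} (h : ∀ D ∈ w, D ≠ []) :
    EquivT T w (ascNF T w) ∧ bASC (ascNF T w) ⊆ T := by
  rw [ascNF, dif_pos h]
  exact Classical.choose_spec (exists_ascfree T w h)

noncomputable def desNF (T : Set ℕ) (w : List (List ℕ)) : List (List ℕ) :=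
  if h : ∀ D ∈ w, D ≠ [] then Classical.choose (exists_desfree T w h) else w

lemma desNF_spec {T : Set ℕ} {w : List (List ℕ)} (h : ∀ D ∈ w, D ≠ []) :
    EquivT T w (desNF T w) ∧ bDES (desNF T w) ⊆ T := by
  rw [desNF, dif_pos h]
  exact Classical.choose_spec (exists_desfree T w h)

open Classical in
lemma filter_card_sum (Cfin : Finset (List (List ℕ))) (f : List (List ℕ) → Set ℕ) (n : ℕ)
    (hf : ∀ w ∈ Cfin, ∀ i ∈ f w, i < n) (T : Finset ℕ) :
    (Cfin.filter fun w => f w ⊆ ↑T).card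
      = ∑ U ∈ T.powerset, (Cfin.filter fun w => f w = ↑U).card := by
  have hU : Cfin.filter (fun w => f w ⊆ ↑T)
      = T.powerset.biUnion (fun U => Cfin.filter (fun w => f w = ↑U)) := by
    ext w
    simp only [Finset.mem_filter, Finset.mem_biUnion, Finset.mem_powerset]
    constructor
    · rintro ⟨hC, hsub⟩
      refine ⟨(Finset.range n).filter (· ∈ f w), ?_, hC, ?_⟩
      · intro i hi
        simp only [Finset.mem_filter, Finset.mem_range] at hi
        exact hsub hi.2
      · ext i
        simp only [Finset.coe_filter, Finset.mem_range, Set.mem_setOf_eq, Finset.mem_coe]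
        have hiff : ∀ j, j ∈ f w → j < n := hf w hC
        constructor <;> intro hi
        · first
          | exact hi.2
          | exact hi.1
          | exact ⟨hiff i hi, hi⟩
          | exact ⟨hi, hiff i hi⟩
        · first
          | exact hi.2
          | exact hi.1
          | exact ⟨hiff i hi, hi⟩
          | exact ⟨hi, hiff i hi⟩
    · rintro ⟨U, hUT, hC, he⟩
      refine ⟨hC, ?_⟩
      rw [he]
      exact fun i hi => hUT hi
  rw [hU]
  apply Finset.card_biUnion
  intro U hU' V hV' hUV
  rw [Function.onFun, Finset.disjoint_left]
  intro w hw1 hw2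
  simp only [Finset.mem_filter] at hw1 hw2
  exact hUV (Finset.coe_injective (hw1.2.symm.trans hw2.2))

/-- Main combinatorial theorem: `bDES` and `bASC` are equidistributed over the
equivalence class of a word with nonempty blocks. -/
theorem main_equidist (π : List (List ℕ)) (hπ0 : ∀ D ∈ π, D ≠ []) (S : Set ℕ) :
    {π' | PCW.Equiv π π' ∧ bDES π' = S}.ncard
      = {π' | PCW.Equiv π π' ∧ bASC π' = S}.ncard := by
  classical
  -- the class is finite
  have hCfin : Set.Finite {π' | PCW.Equiv π π'} := by
    apply Set.Finite.subset (π.permutations.toFinset.finite_toSet)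
    intro w hw
    simp only [Set.mem_setOf_eq] at hw
    simp only [Finset.coe_sort_coe, List.coe_toFinset, Set.mem_setOf_eq, List.mem_permutations]
    exact (equiv_perm hw).symm
  set Cfin : Finset (List (List ℕ)) := hCfin.toFinset with hCdef
  have hmemC : ∀ w, w ∈ Cfin ↔ PCW.Equiv π w := by
    intro w
    rw [hCdef, Set.Finite.mem_toFinset]
    rfl
  have hblocks : ∀ w ∈ Cfin, ∀ D ∈ w, D ≠ [] := by
    intro w hw D hD
    exact hπ0 D ((equiv_perm ((hmemC w).1 hw)).symm.subset hD)
  have hlenC : ∀ w ∈ Cfin, w.length = π.length := by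
    intro w hw
    exact (equiv_perm ((hmemC w).1 hw)).length_eq.symm
  -- |A_T| = |B_T| for all T
  have hAB : ∀ T : Set ℕ,
      (Cfin.filter fun w => bDES w ⊆ T).card = (Cfin.filter fun w => bASC w ⊆ T).card := by
    intro T
    apply Finset.card_bij (fun w _ => ascNF T w)
    · -- maps into
      intro w hw
      simp only [Finset.mem_filter] at hw ⊢
      obtain ⟨hwC, hwD⟩ := hw
      obtain ⟨he, hsub⟩ := ascNF_spec (T := T) (hblocks w hwC)
      constructor
      · rw [hmemC]
        exact ((hmemC w).1 hwC).trans he.equiv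
      · exact hsub
    · -- injective
      intro w1 hw1 w2 hw2 he
      simp only [Finset.mem_filter] at hw1 hw2
      obtain ⟨h1e, -⟩ := ascNF_spec (T := T) (hblocks w1 hw1.1)
      obtain ⟨h2e, -⟩ := ascNF_spec (T := T) (hblocks w2 hw2.1)
      have h12 : EquivT T w1 w2 := (h1e.trans (he ▸ h2e.symm))
      exact desfreeT_unique w1.length T w1 w2 le_rfl h12 (hblocks w1 hw1.1) hw1.2 hw2.2
    · -- surjective
      intro z hz
      simp only [Finset.mem_filter] at hz
      obtain ⟨hzC, hzA⟩ := hz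
      obtain ⟨hze, hzsub⟩ := desNF_spec (T := T) (hblocks z hzC)
      refine ⟨desNF T z, ?_, ?_⟩
      · simp only [Finset.mem_filter]
        constructor
        · rw [hmemC]
          exact ((hmemC z).1 hzC).trans hze.equiv
        · exact hzsub
      · -- ascNF T (desNF T z) = z
        have hdz : ∀ D ∈ desNF T z, D ≠ [] := by
          intro D hD
          exact hblocks z hzC D ((equiv_perm hze.equiv).symm.subset hD)
        obtain ⟨hne2, hnsub⟩ := ascNF_spec (T := T) hdz
        apply ascfreeT_unique (ascNF T (desNF T z)).length T _ _ le_rfl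
          ((hne2.symm.trans hze.symm)) _ hnsub hzA
        intro D hD
        exact hdz D ((equiv_perm hne2.equiv).symm.subset hD)
  -- reduce arbitrary S to finite subsets of (0, π.length)
  by_cases hS : S.Finite ∧ ∀ i ∈ S, 0 < i ∧ i < π.length
  · obtain ⟨hSfin, hSsub⟩ := hS
    set S' : Finset ℕ := hSfin.toFinset with hS'def
    have hScoe : ↑S' = S := hSfin.coe_toFinset
    -- set/finset bridge
    have hbridgeD : {π' | PCW.Equiv π π' ∧ bDES π' = S}.ncard
        = (Cfin.filter fun w => bDES w = S).card := by
      rw [← Set.ncard_coe_finset]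
      congr 1
      ext w
      simp only [Set.mem_setOf_eq, Finset.coe_filter, hmemC]
    have hbridgeA : {π' | PCW.Equiv π π' ∧ bASC π' = S}.ncard
        = (Cfin.filter fun w => bASC w = S).card := by
      rw [← Set.ncard_coe_finset]
      congr 1
      ext w
      simp only [Set.mem_setOf_eq, Finset.coe_filter, hmemC]
    rw [hbridgeD, hbridgeA, ← hScoe]
    -- strong induction on S'
    have hboundD : ∀ w ∈ Cfin, ∀ i ∈ bDES w, i < π.length := by
      intro w hw i hi
      rw [mem_bDES_iff] at hi
      rw [← hlenC w hw]
      exact hi.2.1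
    have hboundA : ∀ w ∈ Cfin, ∀ i ∈ bASC w, i < π.length := by
      intro w hw i hi
      rw [mem_bASC_iff] at hi
      rw [← hlenC w hw]
      exact hi.2.1
    suffices hkey : ∀ (k : ℕ) (U : Finset ℕ), U.card ≤ k →
        (Cfin.filter fun w => bDES w = ↑U).card = (Cfin.filter fun w => bASC w = ↑U).card from
      hkey S'.card S' le_rfl
    intro k
    induction k with
    | zero =>
      intro U hU
      have hU0 : U = ∅ := Finset.card_eq_zero.1 (by omega)
      rw [hU0]
      have h1 := filter_card_sum Cfin bDES π.length hboundD ∅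
      have h2 := filter_card_sum Cfin bASC π.length hboundA ∅
      rw [Finset.powerset_empty, Finset.sum_singleton] at h1 h2
      have hd : (Cfin.filter fun w => bDES w = ↑(∅:Finset ℕ)).card
          = (Cfin.filter fun w => bDES w ⊆ ↑(∅:Finset ℕ)).card := by
        rw [h1]
      have ha : (Cfin.filter fun w => bASC w = ↑(∅:Finset ℕ)).card
          = (Cfin.filter fun w => bASC w ⊆ ↑(∅:Finset ℕ)).card := by
        rw [h2]
      rw [hd, ha]
      exact hAB _
    | succ k ih =>
      intro U hU
      rcases Nat.lt_or_ge U.card (k+1) with h | h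
      · exact ih U (by omega)
      · have hUcard : U.card = k + 1 := by omega
        have h1 := filter_card_sum Cfin bDES π.length hboundD U
        have h2 := filter_card_sum Cfin bASC π.length hboundA U
        have hUU : U ∈ U.powerset := Finset.mem_powerset_self U
        rw [← Finset.sum_erase_add _ _ hUU] at h1 h2
        have hsum : ∑ V ∈ U.powerset.erase U, (Cfin.filter fun w => bDES w = ↑V).card
            = ∑ V ∈ U.powerset.erase U, (Cfin.filter fun w => bASC w = ↑V).card := by
          apply Finset.sum_congr rfl
          intro V hV
          rw [Finset.mem_erase, Finset.mem_powerset] at hV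
          have : V.card < U.card := Finset.card_lt_card (lt_of_le_of_ne hV.2 hV.1)
          exact ih V (by omega)
        have hABU := hAB (↑U)
        omega
  · -- S is not a possible statistic value: both sides are empty
    have he1 : {π' | PCW.Equiv π π' ∧ bDES π' = S} = ∅ := by
      ext w
      simp only [Set.mem_setOf_eq, Set.mem_empty_iff_false, iff_false, not_and]
      intro hw he
      apply hS
      constructor
      · rw [← he]
        apply Set.Finite.subset (Set.finite_Iio w.length)
        intro i hi
        rw [mem_bDES_iff] at hi
        exact hi.2.1
      · intro i hi
        rw [← he] at hi
        rw [mem_bDES_iff] at hi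
        refine ⟨hi.1, ?_⟩
        rw [(equiv_perm hw).length_eq]
        exact hi.2.1
    have he2 : {π' | PCW.Equiv π π' ∧ bASC π' = S} = ∅ := by
      ext w
      simp only [Set.mem_setOf_eq, Set.mem_empty_iff_false, iff_false, not_and]
      intro hw he
      apply hS
      constructor
      · rw [← he]
        apply Set.Finite.subset (Set.finite_Iio w.length)
        intro i hi
        rw [mem_bASC_iff] at hi
        exact hi.2.1
      · intro i hi
        rw [← he] at hi
        rw [mem_bASC_iff] at hi
        refine ⟨hi.1, ?_⟩
        rw [(equiv_perm hw).length_eq]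
        exact hi.2.1
    rw [he1, he2]

end PCWProof

namespace PCWProof

def offs (ls : List (List ℕ)) (i : ℕ) : ℕ := ((ls.map List.length).take i).sum

@[simp] lemma offs_zero (ls : List (List ℕ)) : offs ls 0 = 0 := rfl

lemma offs_cons_succ (c : List ℕ) (ls : List (List ℕ)) (i : ℕ) :
    offs (c :: ls) (i+1) = c.length + offs ls i := by
  simp [offs, List.take_succ_cons]

lemma offs_congr {ls ls' : List (List ℕ)} (h : ls.map List.length = ls'.map List.length)
    (i : ℕ) : offs ls i = offs ls' i := by
  unfold offs
  rw [h]

lemma offs_add_lt : ∀ (ls : List (List ℕ)) {i α : ℕ} (hi : i < ls.length)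
    (_ : α < (ls[i]'hi).length), offs ls i + α < ls.flatten.length := by
  intro ls
  induction ls with
  | nil => intro i α hi _; simp at hi
  | cons c ls ih =>
    intro i α hi hα
    rcases i with _ | i
    · simp only [offs_zero, Nat.zero_add, List.flatten_cons, List.length_append]
      simp only [List.getElem_cons_zero] at hα
      omega
    · rw [offs_cons_succ]
      simp only [List.flatten_cons, List.length_append]
      simp only [List.getElem_cons_succ] at hα
      have := ih (i := i) (α := α) (by simpa using hi) hα
      omega

lemma flatten_getElem_offs : ∀ (ls : List (List ℕ)) {i α : ℕ} (hi : i < ls.length)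
    (hα : α < (ls[i]'hi).length),
    ls.flatten[offs ls i + α]'(offs_add_lt ls hi hα) = (ls[i]'hi)[α]'hα := by
  intro ls
  induction ls with
  | nil => intro i α hi _; simp at hi
  | cons c ls ih =>
    intro i α hi hα
    rcases i with _ | i
    · simp only [List.getElem_cons_zero] at hα ⊢
      simp only [offs_zero, Nat.zero_add, List.flatten_cons]
      exact List.getElem_append_left hα
    · simp only [List.getElem_cons_succ] at hα ⊢
      have hrec := ih (i := i) (α := α) (by simpa using hi) hα
      have hflat : (c :: ls).flatten = c ++ ls.flatten := List.flatten_cons ..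
      have hidx : offs (c :: ls) (i+1) + α = (offs ls i + α) + c.length := by
        rw [offs_cons_succ]; omega
      have h2 : offs ls i + α < ls.flatten.length := offs_add_lt ls (by simpa using hi) hα
      calc (c :: ls).flatten[offs (c :: ls) (i+1) + α]'(offs_add_lt _ hi hα)
          = (c ++ ls.flatten)[(offs ls i + α) + c.length]'(by
              simp only [List.length_append]; omega) := by
            congr 1
        _ = ls.flatten[offs ls i + α]'h2 := (List.getElem_append_right' c h2).symm
        _ = (ls[i]'(by simpa using hi))[α]'hα := hrec

lemma flatten_index_decomp : ∀ (ls : List (List ℕ)) {x : ℕ} (hx : x < ls.flatten.length),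
    ∃ (i : ℕ) (hi : i < ls.length) (α : ℕ) (hα : α < (ls[i]'hi).length),
      x = offs ls i + α := by
  intro ls
  induction ls with
  | nil => intro x hx; simp at hx
  | cons c ls ih =>
    intro x hx
    rcases Nat.lt_or_ge x c.length with h | h
    · exact ⟨0, by simp, x, by simpa using h, by simp⟩
    · have hx' : x - c.length < ls.flatten.length := by
        simp only [List.flatten_cons, List.length_append] at hx
        omega
      obtain ⟨i, hi, α, hα, he⟩ := ih hx'
      refine ⟨i+1, by simpa using hi, α, by simpa using hα, ?_⟩
      rw [offs_cons_succ]
      omega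

end PCWProof

namespace PCWProof

lemma swapIdx_eq_t_iff {t j : ℕ} : swapIdx t j = t ↔ j = t + 1 := by
  unfold swapIdx; split_ifs <;> omega

lemma swapIdx_eq_succ_iff {t j : ℕ} : swapIdx t j = t + 1 ↔ j = t := by
  unfold swapIdx; split_ifs <;> omega

open Classical in
noncomputable def swapOcc (t : ℕ) {N n₁ n₂ : ℕ} (hn : n₁ = n₂) (ht : t + 1 < n₂)
    (o : (Fin N → Fin n₁) × (Fin N → ℕ)) : (Fin N → Fin n₂) × (Fin N → ℕ) :=
  if hB : (∃ i, ((o.1 i : ℕ) = t)) ∧ (∃ i, ((o.1 i : ℕ) = t + 1)) then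
    (fun i => Fin.cast hn (o.1 i),
     fun i => o.2 (Equiv.swap (Classical.choose hB.1) (Classical.choose hB.2) i))
  else
    (fun i => ⟨swapIdx t (o.1 i), swapIdx_lt (by have := (o.1 i).isLt; omega) ht⟩, o.2)

open Classical in
lemma swapOcc_swapOcc {t N n₁ n₂ : ℕ} (hn : n₁ = n₂) (ht : t + 1 < n₂)
    (hn' : n₂ = n₁) (ht' : t + 1 < n₁)
    (o : (Fin N → Fin n₁) × (Fin N → ℕ)) (hmono : StrictMono o.1) :
    swapOcc t hn' ht' (swapOcc t hn ht o) = o := by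
  by_cases hB : (∃ i, ((o.1 i : ℕ) = t)) ∧ (∃ i, ((o.1 i : ℕ) = t + 1))
  · set i0 := Classical.choose hB.1 with hi0
    set i1 := Classical.choose hB.2 with hi1
    have he0 : ((o.1 i0 : ℕ)) = t := Classical.choose_spec hB.1
    have he1 : ((o.1 i1 : ℕ)) = t + 1 := Classical.choose_spec hB.2
    set F : Fin N → Fin n₂ := fun i => Fin.cast hn (o.1 i) with hF
    set G : Fin N → ℕ := fun i => o.2 (Equiv.swap i0 i1 i) with hG
    have hinner : swapOcc t hn ht o = (F, G) := by
      rw [swapOcc, dif_pos hB]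
    rw [hinner]
    have hB' : (∃ i, (((F, G).1 i : ℕ) = t)) ∧ (∃ i, (((F, G).1 i : ℕ) = t + 1)) :=
      ⟨⟨i0, he0⟩, ⟨i1, he1⟩⟩
    rw [swapOcc, dif_pos hB']
    have hij0 : Classical.choose hB'.1 = i0 := by
      have hs := Classical.choose_spec hB'.1
      have : o.1 (Classical.choose hB'.1) = o.1 i0 := by
        apply Fin.ext
        simp only [hF, Fin.coe_cast] at hs
        exact hs.trans he0.symm
      exact hmono.injective this
    have hij1 : Classical.choose hB'.2 = i1 := by
      have hs := Classical.choose_spec hB'.2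
      have : o.1 (Classical.choose hB'.2) = o.1 i1 := by
        apply Fin.ext
        simp only [hF, Fin.coe_cast] at hs
        exact hs.trans he1.symm
      exact hmono.injective this
    apply Prod.ext
    · funext i
      apply Fin.ext
      simp [hF]
    · funext i
      simp only [hij0, hij1, hG]
      rw [Equiv.swap_apply_self]
  · have hinner : swapOcc t hn ht o =
        (fun i => (⟨swapIdx t (o.1 i), swapIdx_lt (by have := (o.1 i).isLt; omega) ht⟩ : Fin n₂),
          o.2) := by
      rw [swapOcc, dif_neg hB]
    rw [hinner]
    have hB' : ¬ ((∃ i, ((swapIdx t ((o.1 i : ℕ)) : ℕ) = t)) ∧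
        (∃ i, ((swapIdx t ((o.1 i : ℕ)) : ℕ) = t + 1))) := by
      intro ⟨⟨i, hi⟩, ⟨j, hj⟩⟩
      rw [swapIdx_eq_t_iff] at hi
      rw [swapIdx_eq_succ_iff] at hj
      exact hB ⟨⟨j, hj⟩, ⟨i, hi⟩⟩
    rw [swapOcc, dif_neg (by simpa using hB')]

    apply Prod.ext
    · funext i
      apply Fin.ext
      simp [swapIdx_swapIdx]
    · rfl

end PCWProof

namespace PCWProof

lemma get_eq_getD {l : List (List ℕ)} (i : Fin l.length) : l.get i = l.getD (i : ℕ) [] := by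
  rw [List.get_eq_getElem, List.getD_eq_getElem l [] i.isLt]

lemma getElem_list_congr {l l' : List ℕ} (h : l = l') {k : ℕ} (hk : k < l.length) :
    l[k]'hk = l'[k]'(h ▸ hk) := by subst h; rfl

lemma getElem_idx_congr {l : List ℕ} {i i' : ℕ} (h : i = i') (hi : i < l.length) :
    l[i]'hi = l[i']'(h ▸ hi) := by subst h; rfl

open Classical in
lemma swapOcc_mem {u v : List (List ℕ)} {a b : List ℕ} (hcomp : sb a b ∨ sb b a)
    {p : List (List ℕ)} (hp : p.Chain' fun x y => x = y ∨ (¬ sb x y ∧ ¬ sb y x))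
    (hn : (u ++ a :: b :: v).length = (u ++ b :: a :: v).length)
    (ht : u.length + 1 < (u ++ b :: a :: v).length)
    {o : (Fin p.length → Fin (u ++ a :: b :: v).length) × (Fin p.length → ℕ)}
    (ho : o ∈ blockOccs p (u ++ a :: b :: v)) :
    swapOcc u.length hn ht o ∈ blockOccs p (u ++ b :: a :: v) := by
  obtain ⟨hmono, hbound, hiso⟩ := ho
  by_cases hB : (∃ i, ((o.1 i : ℕ) = u.length)) ∧ (∃ i, ((o.1 i : ℕ) = u.length + 1))
  · -- hard case : both a and b are hit
    set i0 := Classical.choose hB.1 with hi0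
    set i1 := Classical.choose hB.2 with hi1
    have he0 : ((o.1 i0 : ℕ)) = u.length := Classical.choose_spec hB.1
    have he1 : ((o.1 i1 : ℕ)) = u.length + 1 := Classical.choose_spec hB.2
    have hlt01 : i0 < i1 := by
      rw [← hmono.lt_iff_lt, Fin.lt_def]
      omega
    have hlt01' : (i0 : ℕ) < (i1 : ℕ) := hlt01
    have hadj : (i1 : ℕ) = (i0 : ℕ) + 1 := by
      by_contra hne2
      have h2 : (i0 : ℕ) + 1 < (i1 : ℕ) := by omega
      have l1 : o.1 i0 < o.1 ⟨(i0:ℕ)+1, by have := i1.isLt; omega⟩ :=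
        hmono (by rw [Fin.lt_def]; simp)
      have l2 : o.1 ⟨(i0:ℕ)+1, by have := i1.isLt; omega⟩ < o.1 i1 :=
        hmono (by rw [Fin.lt_def]; simpa using h2)
      rw [Fin.lt_def] at l1 l2
      omega
    set σ := Equiv.swap i0 i1 with hσdef
    have hσ0 : σ i0 = i1 := Equiv.swap_apply_left _ _
    have hσ1 : σ i1 = i0 := Equiv.swap_apply_right _ _
    have hσe : ∀ i, i ≠ i0 → i ≠ i1 → σ i = i :=
      fun i h1 h2 => Equiv.swap_apply_of_ne_of_ne h1 h2
    -- the blocks hit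
    have ha_at : (u ++ a :: b :: v).get (o.1 i0) = a := by
      rw [get_eq_getD, he0, getD_mid_a]
    have hb_at : (u ++ a :: b :: v).get (o.1 i1) = b := by
      rw [get_eq_getD, he1, getD_mid_b]
    -- the selected pieces
    set pieces : Fin p.length → List ℕ :=
      fun i => (((u ++ a :: b :: v).get (o.1 i)).drop (o.2 i)).take (p.get i).length
      with hpdef
    have hplen : ∀ i, (pieces i).length = (p.get i).length := by
      intro i
      simp only [hpdef, List.length_take, List.length_drop]
      have := hbound i
      omega
    have hmap₁ : (List.ofFn pieces).map List.length = p.map List.length := by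
      apply List.ext_getElem (by simp)
      intro k h1 h2
      simp only [List.getElem_map, List.getElem_ofFn]
      rw [hplen]
      simp [List.get_eq_getElem]
    -- access lemma for L₁
    have haccess : ∀ (j : Fin p.length) (γ : ℕ) (hγ : γ < (p.get j).length),
        ∃ hk : offs p (j:ℕ) + γ < (List.ofFn pieces).flatten.length,
          (List.ofFn pieces).flatten[offs p (j:ℕ) + γ]'hk
            = (pieces j)[γ]'(by rw [hplen]; exact hγ) := by
      intro j γ hγ
      have hjl : (j:ℕ) < (List.ofFn pieces).length := by simp
      have hel : (List.ofFn pieces)[(j:ℕ)]'hjl = pieces j := by simp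
      have hγ' : γ < ((List.ofFn pieces)[(j:ℕ)]'hjl).length := by
        rw [hel, hplen]; exact hγ
      have h1 := offs_add_lt (List.ofFn pieces) hjl hγ'
      have h2 := flatten_getElem_offs (List.ofFn pieces) hjl hγ'
      have hoeq : offs (List.ofFn pieces) (j:ℕ) + γ = offs p (j:ℕ) + γ := by
        rw [offs_congr hmap₁]
      refine ⟨by omega, ?_⟩
      rw [getElem_idx_congr hoeq.symm (by omega), ← hoeq] at *
      rw [h2, getElem_list_congr hel]
    -- access lemma for p.flatten
    have haccessP : ∀ (j : Fin p.length) (γ : ℕ) (hγ : γ < (p.get j).length),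
        ∃ hk : offs p (j:ℕ) + γ < p.flatten.length,
          p.flatten[offs p (j:ℕ) + γ]'hk = (p.get j)[γ]'hγ := by
      intro j γ hγ
      have hjl : (j:ℕ) < p.length := j.isLt
      have hγ' : γ < (p[(j:ℕ)]'hjl).length := by
        rw [← List.get_eq_getElem]; exact hγ
      refine ⟨offs_add_lt p hjl hγ', ?_⟩
      rw [flatten_getElem_offs p hjl hγ']
      rfl
    obtain ⟨hlen1, hiso2⟩ := hiso
    -- sb transfer : the two pattern blocks are comparable hence equal
    have hsb2 : sb (p.get i0) (p.get i1) ∨ sb (p.get i1) (p.get i0) := by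
      rcases hcomp with hab | hba
      · left
        intro x hx y hy
        obtain ⟨α, hα, hxe⟩ := List.mem_iff_getElem.1 hx
        obtain ⟨β, hβ, hye⟩ := List.mem_iff_getElem.1 hy
        have hα' := hα
        have hβ' := hβ
        obtain ⟨hkA, hvA⟩ := haccess i0 α hα'
        obtain ⟨hkB, hvB⟩ := haccess i1 β hβ'
        obtain ⟨hkA', hvA'⟩ := haccessP i0 α hα'
        obtain ⟨hkB', hvB'⟩ := haccessP i1 β hβ'
        -- the piece elements lie in a resp b
        have hmemA : (pieces i0)[α]'(by rw [hplen]; exact hα') ∈ a := by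
          have hsub : pieces i0 ⊆ a := by
            rw [hpdef]
            simp only
            rw [ha_at]
            exact fun z hz => List.drop_subset _ _ (List.take_subset _ _ hz)
          exact hsub (List.getElem_mem _)
        have hmemB : (pieces i1)[β]'(by rw [hplen]; exact hβ') ∈ b := by
          have hsub : pieces i1 ⊆ b := by
            rw [hpdef]
            simp only
            rw [hb_at]
            exact fun z hz => List.drop_subset _ _ (List.take_subset _ _ hz)
          exact hsub (List.getElem_mem _)
        have hlt : (List.ofFn pieces).flatten[offs p (i0:ℕ) + α]'hkA
            < (List.ofFn pieces).flatten[offs p (i1:ℕ) + β]'hkB := by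
          rw [hvA, hvB]
          exact hab _ hmemA _ hmemB
        have := (hiso2 _ _ hkA hkB).1 hlt
        rw [hvA', hvB'] at this
        rw [← hxe, ← hye]
        exact this
      · right
        intro y hy x hx
        obtain ⟨α, hα, hxe⟩ := List.mem_iff_getElem.1 hx
        obtain ⟨β, hβ, hye⟩ := List.mem_iff_getElem.1 hy
        have hα' := hα
        have hβ' := hβ
        obtain ⟨hkA, hvA⟩ := haccess i0 α hα'
        obtain ⟨hkB, hvB⟩ := haccess i1 β hβ'
        obtain ⟨hkA', hvA'⟩ := haccessP i0 α hα'
        obtain ⟨hkB', hvB'⟩ := haccessP i1 β hβ'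
        have hmemA : (pieces i0)[α]'(by rw [hplen]; exact hα') ∈ a := by
          have hsub : pieces i0 ⊆ a := by
            rw [hpdef]
            simp only
            rw [ha_at]
            exact fun z hz => List.drop_subset _ _ (List.take_subset _ _ hz)
          exact hsub (List.getElem_mem _)
        have hmemB : (pieces i1)[β]'(by rw [hplen]; exact hβ') ∈ b := by
          have hsub : pieces i1 ⊆ b := by
            rw [hpdef]
            simp only
            rw [hb_at]
            exact fun z hz => List.drop_subset _ _ (List.take_subset _ _ hz)
          exact hsub (List.getElem_mem _)
        have hlt : (List.ofFn pieces).flatten[offs p (i1:ℕ) + β]'hkB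
            < (List.ofFn pieces).flatten[offs p (i0:ℕ) + α]'hkA := by
          rw [hvA, hvB]
          exact hba _ hmemB _ hmemA
        have := (hiso2 _ _ hkB hkA).1 hlt
        rw [hvA', hvB'] at this
        rw [← hxe, ← hye]
        exact this
    -- the two pattern blocks are equal
    have hpp : p.get i0 = p.get i1 := by
      have hchain : (fun x y => x = y ∨ (¬ sb x y ∧ ¬ sb y x)) (p.get ⟨(i0:ℕ), by omega⟩)
          (p.get ⟨(i0:ℕ)+1, by omega⟩) := by
        simpa only [List.get_eq_getElem] using
          List.isChain_iff_getElem.1 hp (i0:ℕ) (by have := i1.isLt; omega)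
      have e1 : (⟨(i0:ℕ), by omega⟩ : Fin p.length) = i0 := by apply Fin.ext; rfl
      have e2 : (⟨(i0:ℕ)+1, by omega⟩ : Fin p.length) = i1 := by
        apply Fin.ext; simp [hadj]
      rw [e1, e2] at hchain
      rcases hchain with h | ⟨hn1, hn2⟩
      · exact h
      · rcases hsb2 with h | h
        · exact absurd h hn1
        · exact absurd h hn2
    have hppσ : ∀ i, p.get (σ i) = p.get i := by
      intro i
      by_cases h1 : i = i0
      · rw [h1, hσ0, hpp]
      · by_cases h2 : i = i1
        · rw [h2, hσ1, hpp]
        · rw [hσe i h1 h2]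
    -- the image occurrence
    set F : Fin p.length → Fin (u ++ b :: a :: v).length :=
      fun i => Fin.cast hn (o.1 i) with hF
    set G : Fin p.length → ℕ := fun i => o.2 (σ i) with hG
    have hinner : swapOcc u.length hn ht o = (F, G) := by
      rw [swapOcc, dif_pos hB]
    rw [hinner]
    -- blocks of the image
    have hblocks₂ : ∀ i, (u ++ b :: a :: v).get (F i) = (u ++ a :: b :: v).get (o.1 (σ i)) := by
      intro i
      rw [get_eq_getD, get_eq_getD]
      have hFv : ((F i : ℕ)) = ((o.1 i : ℕ)) := rfl
      rw [hFv]
      by_cases h1 : i = i0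
      · rw [h1, hσ0, he0, he1, getD_mid_a, getD_mid_b]
      · by_cases h2 : i = i1
        · rw [h2, hσ1, he1, he0, getD_mid_b, getD_mid_a]
        · rw [hσe i h1 h2]
          have hv1 : ((o.1 i : ℕ)) ≠ u.length := by
            intro hc
            exact h1 (hmono.injective (Fin.ext (by rw [hc, he0])))
          have hv2 : ((o.1 i : ℕ)) ≠ u.length + 1 := by
            intro hc
            exact h2 (hmono.injective (Fin.ext (by rw [hc, he1])))
          rw [getD_swap_eq (a := a) (b := b) ((o.1 i : ℕ))]
          congr 1
          unfold swapIdx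
          rw [if_neg hv1, if_neg hv2]
    refine ⟨?_, ?_, ?_⟩
    · -- strict mono
      intro i j hij
      have := hmono hij
      rw [Fin.lt_def] at this ⊢
      exact this
    · -- bounds
      intro i
      show G i + (p.get i).length ≤ ((u ++ b :: a :: v).get (F i)).length
      rw [hblocks₂, hG]
      simp only
      have := hbound (σ i)
      rw [hppσ] at this
      exact this
    · -- order isomorphism
      set pieces₂ : Fin p.length → List ℕ :=
        fun i => (((u ++ b :: a :: v).get (F i)).drop (G i)).take (p.get i).length
        with hp2def
      show OrdIso (List.ofFn pieces₂).flatten p.flatten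
      have hpieces₂ : ∀ i, pieces₂ i = pieces (σ i) := by
        intro i
        rw [hp2def]
        simp only
        rw [hblocks₂, hpdef]
        simp only
        rw [hppσ, hG]
      have hplen₂ : ∀ i, (pieces₂ i).length = (p.get i).length := by
        intro i
        rw [hpieces₂, hplen, hppσ]
      have hmap₂ : (List.ofFn pieces₂).map List.length = p.map List.length := by
        apply List.ext_getElem (by simp)
        intro k h1 h2
        simp only [List.getElem_map, List.getElem_ofFn]
        rw [hplen₂]
        simp [List.get_eq_getElem]
      have haccess₂ : ∀ (j : Fin p.length) (γ : ℕ) (hγ : γ < (p.get j).length),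
          ∃ hk : offs p (j:ℕ) + γ < (List.ofFn pieces₂).flatten.length,
            (List.ofFn pieces₂).flatten[offs p (j:ℕ) + γ]'hk
              = (pieces₂ j)[γ]'(by rw [hplen₂]; exact hγ) := by
        intro j γ hγ
        have hjl : (j:ℕ) < (List.ofFn pieces₂).length := by simp
        have hel : (List.ofFn pieces₂)[(j:ℕ)]'hjl = pieces₂ j := by simp
        have hγ' : γ < ((List.ofFn pieces₂)[(j:ℕ)]'hjl).length := by
          rw [hel, hplen₂]; exact hγ
        have h1 := offs_add_lt (List.ofFn pieces₂) hjl hγ'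
        have h2 := flatten_getElem_offs (List.ofFn pieces₂) hjl hγ'
        have hoeq : offs (List.ofFn pieces₂) (j:ℕ) + γ = offs p (j:ℕ) + γ := by
          rw [offs_congr hmap₂]
        refine ⟨by omega, ?_⟩
        rw [getElem_idx_congr hoeq.symm (by omega), ← hoeq] at *
        rw [h2, getElem_list_congr hel]
      have hlen₂ : (List.ofFn pieces₂).flatten.length = p.flatten.length := by
        rw [List.length_flatten, hmap₂, ← List.length_flatten]
      refine ⟨hlen₂, ?_⟩
      intro x y hx hy
      obtain ⟨i', hi', α, hα, hxe⟩ := flatten_index_decomp (List.ofFn pieces₂) hx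
      obtain ⟨j', hj', β, hβ, hye⟩ := flatten_index_decomp (List.ofFn pieces₂) hy
      have hi'N : i' < p.length := by simpa using hi'
      have hj'N : j' < p.length := by simpa using hj'
      set I : Fin p.length := ⟨i', hi'N⟩ with hIdef
      set J : Fin p.length := ⟨j', hj'N⟩ with hJdef
      have hαI : α < (p.get I).length := by
        rw [← hplen₂]
        have : (List.ofFn pieces₂)[i']'hi' = pieces₂ I := by
          simp [List.getElem_ofFn, hIdef]
        rwa [this] at hα
      have hβJ : β < (p.get J).length := by
        rw [← hplen₂]
        have : (List.ofFn pieces₂)[j']'hj' = pieces₂ J := by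
          simp [List.getElem_ofFn, hJdef]
        rwa [this] at hβ
      have hxe' : x = offs p (I:ℕ) + α := by
        rw [hxe, offs_congr hmap₂]
      have hye' : y = offs p (J:ℕ) + β := by
        rw [hye, offs_congr hmap₂]
      -- values of L₂
      obtain ⟨hk2I, hv2I⟩ := haccess₂ I α hαI
      obtain ⟨hk2J, hv2J⟩ := haccess₂ J β hβJ
      -- values of L₁ at the swapped offsets
      have hαI' : α < (p.get (σ I)).length := by rwa [hppσ]
      have hβJ' : β < (p.get (σ J)).length := by rwa [hppσ]
      obtain ⟨hk1I, hv1I⟩ := haccess (σ I) α hαI'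
      obtain ⟨hk1J, hv1J⟩ := haccess (σ J) β hβJ'
      obtain ⟨hkPI, hvPI⟩ := haccessP I α hαI
      obtain ⟨hkPJ, hvPJ⟩ := haccessP J β hβJ
      obtain ⟨hkPI', hvPI'⟩ := haccessP (σ I) α hαI'
      obtain ⟨hkPJ', hvPJ'⟩ := haccessP (σ J) β hβJ'
      -- rewrite the goal indices
      rw [getElem_idx_congr hxe' hx, getElem_idx_congr hye' hy,
        getElem_idx_congr hxe' (by omega), getElem_idx_congr hye' (by omega)]
      rw [hv2I, hv2J, hvPI, hvPJ]
      -- relate to L₁ via hiso2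
      have hL1 := hiso2 _ _ hk1I hk1J
      rw [hv1I, hv1J, hvPI', hvPJ'] at hL1
      -- pieces₂ values equal pieces (σ ·) values
      have hvx : (pieces₂ I)[α]'(by rw [hplen₂]; exact hαI)
          = (pieces (σ I))[α]'(by rw [hplen, hppσ]; exact hαI) :=
        getElem_list_congr (hpieces₂ I) _
      have hvy : (pieces₂ J)[β]'(by rw [hplen₂]; exact hβJ)
          = (pieces (σ J))[β]'(by rw [hplen, hppσ]; exact hβJ) :=
        getElem_list_congr (hpieces₂ J) _
      have hpx : (p.get (σ I))[α]'hαI' = (p.get I)[α]'hαI :=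
        getElem_list_congr (hppσ I) _
      have hpy : (p.get (σ J))[β]'hβJ' = (p.get J)[β]'hβJ :=
        getElem_list_congr (hppσ J) _
      rw [hvx, hvy]
      rw [hpx, hpy] at hL1
      exact hL1
  · -- easy case : at most one of a, b is hit
    set F : Fin p.length → Fin (u ++ b :: a :: v).length :=
      fun i => ⟨swapIdx u.length (o.1 i),
        swapIdx_lt (by have := (o.1 i).isLt; omega) ht⟩ with hF
    have hinner : swapOcc u.length hn ht o = (F, o.2) := by
      rw [swapOcc, dif_neg hB]
    rw [hinner]
    have hblock : ∀ i, (u ++ b :: a :: v).get (F i) = (u ++ a :: b :: v).get (o.1 i) := by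
      intro i
      rw [get_eq_getD, get_eq_getD]
      show (u ++ b :: a :: v).getD (swapIdx u.length (o.1 i)) [] = _
      rw [getD_swap_eq (a := a) (b := b), swapIdx_swapIdx]
    refine ⟨?_, ?_, ?_⟩
    · intro i j hij
      have h1 := hmono hij
      rw [Fin.lt_def] at h1 ⊢
      show swapIdx u.length (o.1 i) < swapIdx u.length (o.1 j)
      apply swapIdx_mono h1
      rintro ⟨e1, e2⟩
      exact hB ⟨⟨i, e1⟩, ⟨j, e2⟩⟩
    · intro i
      show o.2 i + (p.get i).length ≤ ((u ++ b :: a :: v).get (F i)).length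
      rw [hblock]
      exact hbound i
    · show OrdIso (List.ofFn fun i =>
          (((u ++ b :: a :: v).get (F i)).drop (o.2 i)).take (p.get i).length).flatten
          p.flatten
      have he : (fun i => (((u ++ b :: a :: v).get (F i)).drop (o.2 i)).take (p.get i).length)
          = (fun i => (((u ++ a :: b :: v).get (o.1 i)).drop (o.2 i)).take (p.get i).length) :=
        funext fun i => by rw [hblock]
      rw [he]
      exact hiso

end PCWProof

namespace PCWProof

lemma occ_adj {p : List (List ℕ)} (hp : p.Chain' fun x y => x = y ∨ (¬ sb x y ∧ ¬ sb y x))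
    {w w' : List (List ℕ)} (h : Adj w w') : occ p w = occ p w' := by
  rw [adj_iff] at h
  obtain ⟨u, a, b, v, rfl, rfl, hne, hcomp⟩ := h
  unfold occ
  have hn : (u ++ a :: b :: v).length = (u ++ b :: a :: v).length := by simp
  have ht : u.length + 1 < (u ++ b :: a :: v).length := by
    simp only [List.length_append, List.length_cons]; omega
  have ht' : u.length + 1 < (u ++ a :: b :: v).length := by
    simp only [List.length_append, List.length_cons]; omega
  have himg : swapOcc u.length hn ht '' blockOccs p (u ++ a :: b :: v)
      = blockOccs p (u ++ b :: a :: v) := by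
    apply Set.Subset.antisymm
    · rintro z ⟨o, ho, rfl⟩
      exact swapOcc_mem hcomp hp hn ht ho
    · intro z hz
      have hz' := swapOcc_mem (u := u) (v := v) (a := b) (b := a) hcomp.symm hp hn.symm ht' hz
      refine ⟨swapOcc u.length hn.symm ht' z, hz', ?_⟩
      exact swapOcc_swapOcc hn.symm ht' hn ht z hz.1
  have hinj : Set.InjOn (swapOcc u.length hn ht) (blockOccs p (u ++ a :: b :: v)) := by
    intro o1 h1 o2 h2 he
    have r1 := swapOcc_swapOcc hn ht hn.symm ht' o1 h1.1
    have r2 := swapOcc_swapOcc hn ht hn.symm ht' o2 h2.1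
    rw [← r1, ← r2, he]
  rw [← himg, Set.ncard_image_of_injOn hinj]

lemma occ_equiv {p : List (List ℕ)} (hp : p.Chain' fun x y => x = y ∨ (¬ sb x y ∧ ¬ sb y x))
    {w w' : List (List ℕ)} (h : PCW.Equiv w w') : occ p w = occ p w' := by
  induction h with
  | refl => rfl
  | tail _ h2 ih => exact ih.trans (occ_adj hp h2)

end PCWProof


/-- For any word `π` over `B` and piecewise decreasing connected patterns
`p₁, …, p_m`, the joint statistics `(bDES, (p₁, …, p_m))` and
`(bASC, (p₁, …, p_m))` are equidistributed over the class of `π` in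
`L(B, ≪)`. -/
theorem stmt_8 (π : List (List ℕ)) (hπ : ∀ D ∈ π, PCW.IsBlock D)
    (m : ℕ) (ps : Fin m → List (List ℕ))
    (hpdec : ∀ j, ∀ τ ∈ ps j, PCW.IsBlock τ)
    (hpconn : ∀ j, (ps j).Chain' fun a b => a = b ∨ (¬ PCW.sb a b ∧ ¬ PCW.sb b a))
    (S : Set ℕ) (a : Fin m → ℕ) :
    {π' : List (List ℕ) | PCW.Equiv π π' ∧ PCW.bDES π' = S
        ∧ ∀ j, PCW.occ (ps j) π' = a j}.ncard
      = {π' : List (List ℕ) | PCW.Equiv π π' ∧ PCW.bASC π' = S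
        ∧ ∀ j, PCW.occ (ps j) π' = a j}.ncard := by
  have hπ0 : ∀ D ∈ π, D ≠ [] := fun D hD => (hπ D hD).1
  by_cases ha : ∀ j, PCW.occ (ps j) π = a j
  · have hs1 : {π' : List (List ℕ) | PCW.Equiv π π' ∧ PCW.bDES π' = S
        ∧ ∀ j, PCW.occ (ps j) π' = a j}
        = {π' | PCW.Equiv π π' ∧ PCW.bDES π' = S} := by
      ext π'
      simp only [Set.mem_setOf_eq]
      constructor
      · rintro ⟨h1, h2, -⟩; exact ⟨h1, h2⟩
      · rintro ⟨h1, h2⟩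
        exact ⟨h1, h2, fun j => (PCWProof.occ_equiv (hpconn j) h1).symm.trans (ha j)⟩
    have hs2 : {π' : List (List ℕ) | PCW.Equiv π π' ∧ PCW.bASC π' = S
        ∧ ∀ j, PCW.occ (ps j) π' = a j}
        = {π' | PCW.Equiv π π' ∧ PCW.bASC π' = S} := by
      ext π'
      simp only [Set.mem_setOf_eq]
      constructor
      · rintro ⟨h1, h2, -⟩; exact ⟨h1, h2⟩
      · rintro ⟨h1, h2⟩
        exact ⟨h1, h2, fun j => (PCWProof.occ_equiv (hpconn j) h1).symm.trans (ha j)⟩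
    rw [hs1, hs2]
    exact PCWProof.main_equidist π hπ0 S
  · push_neg at ha
    obtain ⟨j0, hj0⟩ := ha
    have hs1 : {π' : List (List ℕ) | PCW.Equiv π π' ∧ PCW.bDES π' = S
        ∧ ∀ j, PCW.occ (ps j) π' = a j} = ∅ := by
      ext π'
      simp only [Set.mem_setOf_eq, Set.mem_empty_iff_false, iff_false, not_and]
      intro h1 _ h3
      exact hj0 ((PCWProof.occ_equiv (hpconn j0) h1).trans (h3 j0))
    have hs2 : {π' : List (List ℕ) | PCW.Equiv π π' ∧ PCW.bASC π' = S
        ∧ ∀ j, PCW.occ (ps j) π' = a j} = ∅ := by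
      ext π'
      simp only [Set.mem_setOf_eq, Set.mem_empty_iff_false, iff_false, not_and]
      intro h1 _ h3
      exact hj0 ((PCWProof.occ_equiv (hpconn j0) h1).trans (h3 j0))
    rw [hs1, hs2]
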